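/- arXiv:2401.15549 — 3 statements merged into one kernel-verified Lean document; each statement's English description precedes it below -/
import Mathlib

section
/- Let G be a connected nontrivial simple graph with m vertices and let n ≥ 4. If min{n²·λ(G), (n−1)·(m + 2·e(G))} ≥ 2n·δ(G) + 2n − 4, then the strong product G ⊠ K_n is maximally restricted edge-connected, i.e., λ′(G ⊠ K_n) = ξ(G ⊠ K_n). -/
/-- The strong product of two simple graphs. -/
def strongProd {α β : Type*} (G : SimpleGraph α) (H : SimpleGraph β) :
    SimpleGraph (α × β) where
  Adj x y := (x.1 = y.1 ∧ H.Adj x.2 y.2) ∨ (x.2 = y.2 ∧ G.Adj x.1 y.1) ∨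
    (G.Adj x.1 y.1 ∧ H.Adj x.2 y.2)
  symm := by
    constructor
    rintro ⟨a₁, a₂⟩ ⟨b₁, b₂⟩ (⟨h1, h2⟩ | ⟨h1, h2⟩ | ⟨h1, h2⟩)
    · exact Or.inl ⟨h1.symm, h2.symm⟩
    · exact Or.inr (Or.inl ⟨h1.symm, h2.symm⟩)
    · exact Or.inr (Or.inr ⟨h1.symm, h2.symm⟩)
  loopless := by
    constructor
    rintro ⟨a₁, a₂⟩ (⟨_, h⟩ | ⟨_, h⟩ | ⟨h, _⟩)
    · exact H.irrefl h
    · exact G.irrefl h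
    · exact G.irrefl h

/-- The degree of a vertex. -/
noncomputable def deg {α : Type*} (G : SimpleGraph α) (v : α) : ℕ := (G.neighborSet v).ncard

/-- The minimum degree `δ(G)`. -/
noncomputable def minDeg {α : Type*} (G : SimpleGraph α) : ℕ := sInf {d | ∃ v, d = deg G v}

/-- The number of edges `e(G)`. -/
noncomputable def numEdges {α : Type*} (G : SimpleGraph α) : ℕ := G.edgeSet.ncard

/-- The minimum edge-degree `ξ(G) = min {d(u) + d(v) - 2 : uv ∈ E(G)}`. -/
noncomputable def minEdgeDeg {α : Type*} (G : SimpleGraph α) : ℕ :=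
  sInf {d | ∃ u v, G.Adj u v ∧ d = deg G u + deg G v - 2}

/-- The edge-connectivity `λ(G)`. -/
noncomputable def edgeConn {α : Type*} (G : SimpleGraph α) : ℕ :=
  sInf {k | ∃ S : Set (Sym2 α), S ⊆ G.edgeSet ∧ S.ncard = k ∧
    ¬ (G.deleteEdges S).Connected}

/-- `S` is a restricted edge-cut of `G`: deleting `S` disconnects `G` and every
component of `G - S` has at least two vertices. -/
def IsRestrictedEdgeCut {α : Type*} (G : SimpleGraph α) (S : Set (Sym2 α)) : Prop :=
  S ⊆ G.edgeSet ∧ ¬ (G.deleteEdges S).Connected ∧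
    ∀ v : α, 2 ≤ ((G.deleteEdges S).connectedComponentMk v).supp.ncard

/-- The restricted edge-connectivity `λ'(G)`. -/
noncomputable def restEdgeConn {α : Type*} (G : SimpleGraph α) : ℕ :=
  sInf {k | ∃ S : Set (Sym2 α), IsRestrictedEdgeCut G S ∧ S.ncard = k}

/-- `G` is super restricted edge-connected: every minimum restricted edge-cut
isolates an edge, i.e. some component of `G - S` has exactly two vertices. -/
def SuperRestrictedEdgeConnected {α : Type*} (G : SimpleGraph α) : Prop :=
  ∀ S : Set (Sym2 α), IsRestrictedEdgeCut G S → S.ncard = restEdgeConn G →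
    ∃ v : α, ((G.deleteEdges S).connectedComponentMk v).supp.ncard = 2

/-- The set `[X, Y]_G` of edges of `G` with one end in `X` and the other in `Y`. -/
def edgesBetween {α : Type*} (G : SimpleGraph α) (X Y : Set α) : Set (Sym2 α) :=
  {e | e ∈ G.edgeSet ∧ ∃ u ∈ X, ∃ v ∈ Y, e = s(u, v)}


section AuxLemmas

open SimpleGraph

attribute [local instance] Classical.propDecidable

variable {V : Type*}

private lemma sp_adj (G : SimpleGraph V) {n : ℕ} (a b : V × Fin n) :
    (strongProd G (completeGraph (Fin n))).Adj a b ↔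
      (a.1 = b.1 ∧ a.2 ≠ b.2) ∨ G.Adj a.1 b.1 := by
  constructor
  · rintro (⟨h1, h2⟩ | ⟨h1, h2⟩ | ⟨h1, h2⟩)
    · exact Or.inl ⟨h1, h2⟩
    · exact Or.inr h2
    · exact Or.inr h1
  · rintro (⟨h1, h2⟩ | h)
    · exact Or.inl ⟨h1, h2⟩
    · by_cases h2 : a.2 = b.2
      · exact Or.inr (Or.inl ⟨h2, h⟩)
      · exact Or.inr (Or.inr ⟨h, h2⟩)

private lemma reachable_mem {α : Type*} {H : SimpleGraph α} {C : Set α}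
    (hC : ∀ u w, H.Adj u w → u ∈ C → w ∈ C) :
    ∀ {u w : α}, H.Reachable u w → u ∈ C → w ∈ C := by
  intro u w hr
  obtain ⟨p⟩ := hr
  induction p with
  | nil => exact id
  | cons h p ih => exact fun hu => ih (hC _ _ h hu)

private lemma exists_adj_of_reachable_ne {α : Type*} {H : SimpleGraph α} {v w : α}
    (hne : v ≠ w) (hr : H.Reachable v w) : ∃ u, H.Adj v u := by
  obtain ⟨p⟩ := hr
  cases p with
  | nil => exact absurd rfl hne
  | cons h _ => exact ⟨_, h⟩

private lemma exists_adj_of_two_le_supp {α : Type*} [Finite α] {H : SimpleGraph α} {v : α}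
    (h2 : 2 ≤ (H.connectedComponentMk v).supp.ncard) : ∃ w, H.Adj v w := by
  have h1 : 1 < (H.connectedComponentMk v).supp.ncard := h2
  rw [Set.one_lt_ncard (Set.toFinite _)] at h1
  obtain ⟨a, ha, b, hb, hab⟩ := h1
  have hv : ∀ z, z ∈ (H.connectedComponentMk v).supp → H.Reachable v z := by
    intro z hz
    rw [SimpleGraph.ConnectedComponent.mem_supp_iff] at hz
    exact (SimpleGraph.ConnectedComponent.eq.mp hz).symm
  by_cases hav : a = v
  · exact exists_adj_of_reachable_ne (hav ▸ hab) (hv b hb)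
  · exact exists_adj_of_reachable_ne (Ne.symm hav) (hv a ha)

private lemma deg_eq_degree [Fintype V] (G : SimpleGraph V) (v : V) :
    deg G v = G.degree v := by
  classical
  rw [deg, ← SimpleGraph.card_neighborFinset_eq_degree, SimpleGraph.neighborFinset,
    Set.ncard_eq_toFinset_card']

private lemma ncard_incidenceSet [Fintype V] (G : SimpleGraph V) (v : V) :
    (G.incidenceSet v).ncard = deg G v := by
  classical
  rw [deg_eq_degree, ← SimpleGraph.card_incidenceSet_eq_degree,
    Set.ncard_eq_toFinset_card', Set.toFinset_card]

private lemma sp_neighborSet_eq (G : SimpleGraph V) [Fintype V] {n : ℕ} (v : V) (i : Fin n) :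
    (strongProd G (completeGraph (Fin n))).neighborSet (v, i) =
      ↑((({v} : Finset V) ×ˢ ({i}ᶜ : Finset (Fin n))) ∪
        ((G.neighborSet v).toFinset ×ˢ (Finset.univ : Finset (Fin n)))) := by
  ext ⟨w, j⟩
  simp only [SimpleGraph.mem_neighborSet, sp_adj, Finset.coe_union, Set.mem_union,
    Finset.coe_product, Set.mem_prod, Finset.coe_singleton, Set.mem_singleton_iff,
    Finset.coe_compl, Set.mem_compl_iff, Finset.coe_univ, Set.mem_univ, and_true,
    Set.mem_toFinset, SimpleGraph.mem_neighborSet]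
  simp only [Finset.mem_coe, Set.mem_toFinset, SimpleGraph.mem_neighborSet]
  constructor
  · rintro (⟨h1, h2⟩ | h)
    · exact Or.inl ⟨h1.symm, fun hj => h2 (hj ▸ rfl)⟩
    · exact Or.inr h
  · rintro (⟨h1, h2⟩ | h)
    · exact Or.inl ⟨h1.symm, fun hj => h2 hj.symm⟩
    · exact Or.inr h

private lemma deg_sp (G : SimpleGraph V) [Fintype V] {n : ℕ} (v : V) (i : Fin n) :
    deg (strongProd G (completeGraph (Fin n))) (v, i) = n * deg G v + (n - 1) := by
  classical
  rw [deg, sp_neighborSet_eq, Set.ncard_coe_finset, Finset.card_union_of_disjoint,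
    Finset.card_product, Finset.card_product]
  · simp only [Finset.card_singleton, Finset.card_compl, Finset.card_singleton,
      Finset.card_univ, Fintype.card_fin, one_mul]
    have : (G.neighborSet v).toFinset.card = deg G v := by
      rw [deg, Set.ncard_eq_toFinset_card']
    rw [this]
    ring_nf
  · rw [Finset.disjoint_left]
    rintro ⟨w, j⟩ hw hw2
    simp only [Finset.mem_product, Finset.mem_singleton, Set.mem_toFinset,
      SimpleGraph.mem_neighborSet] at hw hw2
    exact G.irrefl (hw.1 ▸ hw2.1)


private lemma fin_exists_ne {n : ℕ} (hn : 4 ≤ n) (a b c : Fin n) :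
    ∃ j : Fin n, j ≠ a ∧ j ≠ b ∧ j ≠ c := by
  by_contra hcon
  push_neg at hcon
  have hsub : (Finset.univ : Finset (Fin n)) ⊆ {a, b, c} := by
    intro j _
    simp only [Finset.mem_insert, Finset.mem_singleton]
    by_cases h1 : j = a
    · exact Or.inl h1
    by_cases h2 : j = b
    · exact Or.inr (Or.inl h2)
    · exact Or.inr (Or.inr (hcon j h1 h2))
  have h3 : ({a, b, c} : Finset (Fin n)).card ≤ 3 := by
    apply le_trans (Finset.card_insert_le _ _)
    have := Finset.card_insert_le b ({c} : Finset (Fin n))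
    simp only [Finset.card_singleton] at this ⊢
    omega
  have h4 := Finset.card_le_card hsub
  simp only [Finset.card_univ, Fintype.card_fin] at h4
  omega

private lemma minDeg_le (G : SimpleGraph V) (v : V) : minDeg G ≤ deg G v :=
  Nat.sInf_le ⟨v, rfl⟩

private lemma exists_minDeg [Nonempty V] (G : SimpleGraph V) : ∃ v, deg G v = minDeg G := by
  have h : minDeg G ∈ {d | ∃ v, d = deg G v} :=
    Nat.sInf_mem ⟨deg G (Classical.arbitrary V), ⟨Classical.arbitrary V, rfl⟩⟩
  obtain ⟨v, hv⟩ := h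
  exact ⟨v, hv.symm⟩

private lemma num_loop {n a b : ℕ} (ha : 1 ≤ a) (hb : 1 ≤ b) (hab : a + b = n) :
    n - 1 ≤ a * b := by
  obtain ⟨a', rfl⟩ := Nat.exists_eq_add_of_le ha
  obtain ⟨b', rfl⟩ := Nat.exists_eq_add_of_le hb
  have he : (1 + a') * (1 + b') = 1 + a' + b' + a' * b' := by ring
  omega

private lemma num_cross_any {n a b c d : ℕ} (ha : 1 ≤ a) (hb : 1 ≤ b)
    (hab : a + b = n) (hcd : c + d = n) : n ≤ a * d + c * b := by
  have h1 : 1 * d ≤ a * d := Nat.mul_le_mul_right d ha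
  have h2 : c * 1 ≤ c * b := Nat.mul_le_mul_left c hb
  omega

private lemma num_cross_ss {n a b c d : ℕ} (ha : 1 ≤ a) (hb : 1 ≤ b) (hc : 1 ≤ c)
    (hd : 1 ≤ d) (hab : a + b = n) (hcd : c + d = n) : n + n - 2 ≤ a * d + c * b := by
  obtain ⟨a', rfl⟩ := Nat.exists_eq_add_of_le ha
  obtain ⟨b', rfl⟩ := Nat.exists_eq_add_of_le hb
  obtain ⟨c', rfl⟩ := Nat.exists_eq_add_of_le hc
  obtain ⟨d', rfl⟩ := Nat.exists_eq_add_of_le hd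
  have h1 : (1 + a') * (1 + d') = 1 + a' + d' + a' * d' := by ring
  have h2 : (1 + c') * (1 + b') = 1 + c' + b' + c' * b' := by ring
  omega

private lemma num_loop2 {n a b : ℕ} (ha : 2 ≤ a) (hb : 2 ≤ b) (hab : a + b = n) :
    2 * n - 4 ≤ a * b := by
  obtain ⟨a', rfl⟩ := Nat.exists_eq_add_of_le ha
  obtain ⟨b', rfl⟩ := Nat.exists_eq_add_of_le hb
  have he : (2 + a') * (2 + b') = 4 + 2 * a' + 2 * b' + a' * b' := by ring
  omega

private lemma num_cross2 {n a b c d : ℕ} (ha : 2 ≤ a) (hb : 2 ≤ b)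
    (hab : a + b = n) (hcd : c + d = n) : 2 * n ≤ a * d + c * b := by
  have h1 : 2 * d ≤ a * d := Nat.mul_le_mul_right d ha
  have h2 : c * 2 ≤ c * b := Nat.mul_le_mul_left c hb
  omega

private lemma arith2 {n δ dv dw F : ℕ} (hn : 4 ≤ n) (hδv : δ ≤ dv) (hδw : δ ≤ dw)
    (h1v : 1 ≤ dv) (h1w : 1 ≤ dw)
    (hF : (n - 1) + ((n + n - 2) + (dv - 1) * n) + ((n - 1) + (dw - 1) * n) ≤ F) :
    2 * n * δ + 2 * n - 4 ≤ F := by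
  have e1 : (dv - 1) * n = dv * n - 1 * n := Nat.sub_mul dv 1 n
  have e2 : (dw - 1) * n = dw * n - 1 * n := Nat.sub_mul dw 1 n
  have m1 : δ * n ≤ dv * n := Nat.mul_le_mul_right n hδv
  have m2 : δ * n ≤ dw * n := Nat.mul_le_mul_right n hδw
  have m3 : 1 * n ≤ dv * n := Nat.mul_le_mul_right n h1v
  have m4 : 1 * n ≤ dw * n := Nat.mul_le_mul_right n h1w
  have e3 : 2 * n * δ = δ * n + δ * n := by ring
  omega

private lemma arith3 {n δ dv F : ℕ} (hn : 4 ≤ n) (hδv : δ ≤ dv)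
    (hF : (2 * n - 4) + dv * (2 * n) ≤ F) :
    2 * n * δ + 2 * n - 4 ≤ F := by
  have m1 : δ * (2 * n) ≤ dv * (2 * n) := Nat.mul_le_mul_right _ hδv
  have e1 : 2 * n * δ = δ * (2 * n) := by ring
  omega

private lemma arith4 {n s K L f δ lam F : ℕ} (hn : 4 ≤ n) (hs : 1 ≤ s)
    (hK : s ≤ K) (hKL : s * δ ≤ K + L) (hf : lam ≤ f + K) (hld : lam ≤ δ)
    (hlam : 2 * n * δ + 2 * n - 4 ≤ n ^ 2 * lam)
    (hF : f * (n * n) + s * (n - 1) + K * (n * (n - 1)) + L * n ≤ F) :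
    2 * n * δ + 2 * n - 4 ≤ F := by
  have h4 : (4:ℕ) ≤ 2 * n * δ + 2 * n := by
    have : 8 ≤ 2 * n := by omega
    omega
  have h1n : (1:ℕ) ≤ n := by omega
  zify [h4, h1n] at hlam hF ⊢
  zify at hs hK hKL hf hld hn
  set N : ℤ := (n : ℤ) with hN
  have hN4 : (4:ℤ) ≤ N := hn
  have hl0 : (0:ℤ) ≤ lam := Int.natCast_nonneg lam
  have hd0 : (0:ℤ) ≤ δ := Int.natCast_nonneg δ
  have hs0 : (1:ℤ) ≤ s := hs
  have hf0 : (0:ℤ) ≤ f := Int.natCast_nonneg f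
  have hK0 : (0:ℤ) ≤ K := Int.natCast_nonneg K
  have hL0 : (0:ℤ) ≤ L := Int.natCast_nonneg L
  have hdiv : N * δ + N - 3 ≤ (lam : ℤ) * (N * (N - 2)) := by
    have h1 : N * (N * δ + N - 3) ≤ N * ((lam : ℤ) * (N * (N - 2))) := by
      nlinarith [mul_nonneg (by linarith : (0:ℤ) ≤ N - 2)
          (by linarith : (0:ℤ) ≤ (N:ℤ)^2 * lam - (2 * N * δ + 2 * N - 4)),
        mul_nonneg (mul_nonneg (by linarith : (0:ℤ) ≤ N) hd0)
          (by linarith : (0:ℤ) ≤ N - 4),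
        sq_nonneg (N - 3)]
    exact le_of_mul_le_mul_left h1 (by linarith)
  have hsd : (δ:ℤ) ≤ (s:ℤ) * δ := le_mul_of_one_le_left hd0 hs0
  rcases le_or_gt (lam : ℤ) (K : ℤ) with hc | hc
  · have h0 : (0:ℤ) ≤ (f:ℤ) * (N * N) :=
      mul_nonneg hf0 (mul_nonneg (by linarith) (by linarith))
    have h3 : (1:ℤ) * (N - 1) ≤ (s:ℤ) * (N - 1) :=
      mul_le_mul_of_nonneg_right hs0 (by linarith)
    have h5 : (lam:ℤ) * (N * (N - 2)) ≤ (K:ℤ) * (N * (N - 2)) :=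
      mul_le_mul_of_nonneg_right hc (by nlinarith)
    have h6 : ((s:ℤ) * δ) * N ≤ ((K:ℤ) + L) * N :=
      mul_le_mul_of_nonneg_right hKL (by linarith)
    have h7 : (δ:ℤ) * N ≤ ((s:ℤ) * δ) * N :=
      mul_le_mul_of_nonneg_right hsd (by linarith)
    linarith [h0, h3, h5, h6, h7, hdiv]
  · have hKd : (K:ℤ) + 1 ≤ δ := by linarith
    have hLb : (δ:ℤ) - K ≤ L := by linarith
    have hfb : (lam:ℤ) - K ≤ f := by linarith
    have h1 : ((lam:ℤ) - K) * (N * N) ≤ (f:ℤ) * (N * N) :=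
      mul_le_mul_of_nonneg_right hfb (mul_nonneg (by linarith) (by linarith))
    have h2 : ((δ:ℤ) - K) * N ≤ (L:ℤ) * N :=
      mul_le_mul_of_nonneg_right hLb (by linarith)
    have h3 : (1:ℤ) * (N - 1) ≤ (s:ℤ) * (N - 1) :=
      mul_le_mul_of_nonneg_right hs0 (by linarith)
    have h4 : (K:ℤ) * (2 * N) ≤ ((lam:ℤ) - 1) * (2 * N) :=
      mul_le_mul_of_nonneg_right (by linarith) (by linarith)
    linarith [h1, h2, h3, h4, hdiv]

end AuxLemmas

theorem maximallyRestricted_strongProd_completeGraph {V : Type*} [Fintype V]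
    (G : SimpleGraph V) (m n : ℕ) (hm : Fintype.card V = m) (hnt : 2 ≤ m)
    (hG : G.Connected) (hn : 4 ≤ n)
    (h : 2 * n * minDeg G + 2 * n - 4 ≤
      min (n ^ 2 * edgeConn G) ((n - 1) * (m + 2 * numEdges G))) :
    restEdgeConn (strongProd G (SimpleGraph.completeGraph (Fin n))) =
      minEdgeDeg (strongProd G (SimpleGraph.completeGraph (Fin n))) := by
  classical
  have hNeV : Nonempty V := Fintype.card_pos_iff.mp (by omega)
  set P := strongProd G (SimpleGraph.completeGraph (Fin n)) with hPdef
  obtain ⟨v0, hv0⟩ := exists_minDeg G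
  set δ := minDeg G with hδdef
  let i0 : Fin n := ⟨0, by omega⟩
  let i1 : Fin n := ⟨1, by omega⟩
  have hi01 : i0 ≠ i1 := by simp [i0, i1, Fin.ext_iff]
  have hadj : P.Adj (v0, i0) (v0, i1) := (sp_adj G _ _).mpr (Or.inl ⟨rfl, hi01⟩)
  have hdeg : ∀ (u : V × Fin n), deg P u = n * deg G u.1 + (n - 1) := by
    rintro ⟨v, i⟩; exact deg_sp G v i
  have hξ : minEdgeDeg P = 2 * n * δ + 2 * n - 4 := by
    apply le_antisymm
    · apply Nat.sInf_le
      refine ⟨(v0, i0), (v0, i1), hadj, ?_⟩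
      rw [hdeg, hdeg]
      simp only [hv0]
      have : 2 * n * δ = n * δ + n * δ := by ring
      omega
    · refine le_csInf ⟨_, (v0, i0), (v0, i1), hadj, rfl⟩ ?_
      rintro d ⟨u, w, huw, rfl⟩
      rw [hdeg u, hdeg w]
      have h1 := Nat.mul_le_mul_left n (minDeg_le G u.1)
      have h2 := Nat.mul_le_mul_left n (minDeg_le G w.1)
      rw [← hδdef] at h1 h2
      have : 2 * n * δ = n * δ + n * δ := by ring
      omega
  have hub : ∃ S : Set (Sym2 (V × Fin n)), IsRestrictedEdgeCut P S ∧
      S.ncard = 2 * n * δ + 2 * n - 4 := by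
    set x : V × Fin n := (v0, i0) with hxdef
    set y : V × Fin n := (v0, i1) with hydef
    have hxy : x ≠ y := fun hc => hi01 (congrArg Prod.snd hc)
    set S : Set (Sym2 (V × Fin n)) := (P.incidenceSet x ∪ P.incidenceSet y) \ {s(x, y)}
      with hSdef
    have hmemS : ∀ e, e ∈ S ↔ e ∈ P.edgeSet ∧ (x ∈ e ∨ y ∈ e) ∧ e ≠ s(x, y) := by
      intro e
      simp only [hSdef, Set.mem_diff, Set.mem_union, Set.mem_singleton_iff,
        SimpleGraph.incidenceSet, Set.mem_sep_iff]
      tauto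
    have hSsub : S ⊆ P.edgeSet := fun e he => ((hmemS e).mp he).1
    -- every vertex has a neighbor in P - S
    have hnbr : ∀ v : V × Fin n, ∃ w, (P.deleteEdges S).Adj v w := by
      intro v
      by_cases hvx : v = x
      · refine ⟨y, SimpleGraph.deleteEdges_adj.mpr ⟨hvx ▸ hadj, ?_⟩⟩
        rw [hmemS]
        push_neg
        intro _ _
        rw [hvx]
      by_cases hvy : v = y
      · refine ⟨x, SimpleGraph.deleteEdges_adj.mpr ⟨hvy ▸ hadj.symm, ?_⟩⟩
        rw [hmemS]
        push_neg
        intro _ _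
        rw [hvy, Sym2.eq_swap]
      · obtain ⟨j, hj1, hj2, hj3⟩ := fin_exists_ne hn v.2 x.2 y.2
        refine ⟨(v.1, j), SimpleGraph.deleteEdges_adj.mpr ⟨?_, ?_⟩⟩
        · exact (sp_adj G _ _).mpr (Or.inl ⟨rfl, fun hc => hj1 hc.symm⟩)
        · rw [hmemS]
          rintro ⟨-, hx | hy, -⟩
          · rcases Sym2.mem_iff.mp hx with hc | hc
            · exact hvx hc.symm
            · exact hj2 (congrArg Prod.snd hc).symm
          · rcases Sym2.mem_iff.mp hy with hc | hc
            · exact hvy hc.symm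
            · exact hj3 (congrArg Prod.snd hc).symm
    have hsupp2 : ∀ v : V × Fin n,
        2 ≤ (((P.deleteEdges S).connectedComponentMk v).supp).ncard := by
      intro v
      obtain ⟨w, hw⟩ := hnbr v
      have hvs : v ∈ ((P.deleteEdges S).connectedComponentMk v).supp :=
        SimpleGraph.ConnectedComponent.connectedComponentMk_mem
      have hws : w ∈ ((P.deleteEdges S).connectedComponentMk v).supp := by
        rw [SimpleGraph.ConnectedComponent.mem_supp_iff]
        exact SimpleGraph.ConnectedComponent.eq.mpr hw.symm.reachable
      exact (Set.one_lt_ncard (Set.toFinite _)).mpr ⟨v, hvs, w, hws, hw.ne⟩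
    -- component of x is {x, y}
    have hclosed : ∀ u w : V × Fin n, (P.deleteEdges S).Adj u w →
        u ∈ ({x, y} : Set (V × Fin n)) → w ∈ ({x, y} : Set (V × Fin n)) := by
      intro u w huw hu
      obtain ⟨hadj', hnS⟩ := SimpleGraph.deleteEdges_adj.mp huw
      rw [hmemS] at hnS
      push_neg at hnS
      simp only [Set.mem_insert_iff, Set.mem_singleton_iff] at hu ⊢
      have hue : x ∈ s(u, w) ∨ y ∈ s(u, w) := by
        rcases hu with hu | hu
        · exact Or.inl (hu ▸ Sym2.mem_mk_left u w)
        · exact Or.inr (hu ▸ Sym2.mem_mk_left u w)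
      have heq : s(u, w) = s(x, y) := hnS (P.mem_edgeSet.mpr hadj') hue
      have hwm : w ∈ s(x, y) := heq ▸ Sym2.mem_mk_right u w
      exact Sym2.mem_iff.mp hwm
    have hz : ∃ z : V × Fin n, z ≠ x ∧ z ≠ y := by
      by_contra hcon
      push_neg at hcon
      have hsub : (Finset.univ : Finset (V × Fin n)) ⊆ {x, y} := by
        intro z _
        simp only [Finset.mem_insert, Finset.mem_singleton]
        by_cases h1 : z = x
        · exact Or.inl h1
        · exact Or.inr (hcon z h1)
      have hc1 := Finset.card_le_card hsub
      have h2 : ({x, y} : Finset (V × Fin n)).card ≤ 2 := by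
        apply le_trans (Finset.card_insert_le _ _)
        simp
      simp only [Finset.card_univ, Fintype.card_prod, Fintype.card_fin, hm] at hc1
      have h8 : 8 ≤ m * n := by
        calc 8 = 2 * 4 := rfl
        _ ≤ m * n := Nat.mul_le_mul hnt hn
      omega
    obtain ⟨z, hzx, hzy⟩ := hz
    have hnotconn : ¬ (P.deleteEdges S).Connected := by
      intro hc
      have hr := hc.preconnected x z
      have hmem : z ∈ ({x, y} : Set (V × Fin n)) := reachable_mem hclosed hr (Or.inl rfl)
      rcases hmem with hh | hh
      · exact hzx hh
      · exact hzy hh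
    have hcard : S.ncard = 2 * n * δ + 2 * n - 4 := by
      have hinter := P.incidenceSet_inter_incidenceSet_of_adj hadj
      have hui := Set.ncard_union_add_ncard_inter (P.incidenceSet x) (P.incidenceSet y)
        (Set.toFinite _) (Set.toFinite _)
      rw [hinter, Set.ncard_singleton, ncard_incidenceSet, ncard_incidenceSet] at hui
      have hmem : s(x, y) ∈ P.incidenceSet x ∪ P.incidenceSet y :=
        Or.inl ⟨P.mem_edgeSet.mpr hadj, Sym2.mem_mk_left _ _⟩
      have hdiff := Set.ncard_diff_singleton_of_mem hmem
      have hx1 : deg G x.1 = δ := hv0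
      have hy1 : deg G y.1 = δ := hv0
      rw [hdeg x, hdeg y, hx1] at hui
      rw [hSdef, hdiff]
      have h2nδ : 2 * n * δ = n * δ + n * δ := by ring
      omega
    exact ⟨S, ⟨hSsub, hnotconn, hsupp2⟩, hcard⟩
  have hlb : ∀ S : Set (Sym2 (V × Fin n)), IsRestrictedEdgeCut P S →
      2 * n * δ + 2 * n - 4 ≤ S.ncard := by
    intro S hS
    obtain ⟨hSsub, hSdisc, hScomp⟩ := hS
    set Q := P.deleteEdges S with hQdef
    have hVFne : Nonempty (V × Fin n) := ⟨(Classical.arbitrary V, i0)⟩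
    haveI := hVFne
    have hpre : ¬ ∀ u v : V × Fin n, Q.Reachable u v := fun hp =>
      hSdisc (SimpleGraph.Connected.mk hp)
    push_neg at hpre
    obtain ⟨p, q, hpq⟩ := hpre
    set X : Set (V × Fin n) := (Q.connectedComponentMk p).supp with hXdef
    have hXiff : ∀ z : V × Fin n, z ∈ X ↔ Q.Reachable z p := by
      intro z
      rw [hXdef, SimpleGraph.ConnectedComponent.mem_supp_iff]
      exact SimpleGraph.ConnectedComponent.eq
    have hpX : p ∈ X := (hXiff p).mpr (SimpleGraph.Reachable.refl p)
    have hqX : q ∉ X := fun hq => hpq (((hXiff q).mp hq).symm)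
    have hcross : ∀ z w : V × Fin n, P.Adj z w → z ∈ X → w ∉ X → s(z, w) ∈ S := by
      intro z w hzw hz hw
      by_contra hs
      have hQadj : Q.Adj z w := SimpleGraph.deleteEdges_adj.mpr ⟨hzw, hs⟩
      exact hw ((hXiff w).mpr (hQadj.symm.reachable.trans ((hXiff z).mp hz)))
    have hside : ∀ z : V × Fin n, ∃ w, Q.Adj z w ∧ (w ∈ X ↔ z ∈ X) := by
      intro z
      obtain ⟨w, hw⟩ := exists_adj_of_two_le_supp (hScomp z)
      refine ⟨w, hw, ?_⟩
      rw [hXiff w, hXiff z]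
      exact ⟨fun hr => hw.reachable.trans hr, fun hr => hw.symm.reachable.trans hr⟩
    -- index sets and sizes
    set IX : V → Finset (Fin n) := fun v => Finset.univ.filter (fun i => (v, i) ∈ X)
      with hIdef
    set av : V → ℕ := fun v => (IX v).card with havdef
    have hmemI : ∀ v i, i ∈ IX v ↔ (v, i) ∈ X := by
      intro v i; simp [hIdef]
    have havle : ∀ v, av v ≤ n := by
      intro v
      rw [havdef]
      calc (IX v).card ≤ Finset.univ.card := Finset.card_le_univ _
        _ = n := by simp
    have hbv : ∀ v, ((IX v)ᶜ).card = n - av v := fun v => by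
      rw [Finset.card_compl]; simp [havdef]
    -- fibers of the projection
    have hSfin : S.Finite := Set.toFinite _
    set sF : Finset (Sym2 (V × Fin n)) := hSfin.toFinset with hsFdef
    have hsF : S.ncard = sF.card := Set.ncard_eq_toFinset_card _ hSfin
    set proj : Sym2 (V × Fin n) → Sym2 V := Sym2.map Prod.fst with hprojdef
    set fib : Sym2 V → Finset (Sym2 (V × Fin n)) := fun e => sF.filter (fun f => proj f = e)
      with hfibdef
    have hkey : ∀ T : Finset (Sym2 V), (∑ e ∈ T, (fib e).card) ≤ sF.card := by
      intro T
      have h1 : (sF.filter (fun f => proj f ∈ T)).card =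
          ∑ e ∈ T, ((sF.filter (fun f => proj f ∈ T)).filter (fun f => proj f = e)).card :=
        Finset.card_eq_sum_card_fiberwise (fun f hf => (Finset.mem_filter.mp hf).2)
      have h2 : ∀ e ∈ T, ((sF.filter (fun f => proj f ∈ T)).filter (fun f => proj f = e))
          = fib e := by
        intro e he
        rw [hfibdef, Finset.filter_filter]
        apply Finset.filter_congr
        intro f _
        constructor
        · exact fun hh => hh.2
        · intro hh
          refine ⟨?_, hh⟩
          rw [hh]
          exact he
      rw [Finset.sum_congr rfl (fun e he => by rw [h2 e he] :
        ∀ e ∈ T, (Finset.filter (fun f => proj f ∈ T) sF |>.filter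
          (fun f => proj f = e)).card = (fib e).card)] at h1
      rw [← h1]
      exact Finset.card_filter_le _ _
    have hfibloop : ∀ v : V, av v * (n - av v) ≤ (fib s(v, v)).card := by
      intro v
      rw [← hbv v]
      have hmap : ∀ ij ∈ IX v ×ˢ (IX v)ᶜ,
          s(((v, ij.1) : V × Fin n), (v, ij.2)) ∈ fib s(v, v) := by
        rintro ⟨i, j⟩ hij
        rw [Finset.mem_product, Finset.mem_compl] at hij
        have hiX : (v, i) ∈ X := (hmemI v i).mp hij.1
        have hjX : (v, j) ∉ X := fun hc => hij.2 ((hmemI v j).mpr hc)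
        have hne : i ≠ j := fun hc => hjX (hc ▸ hiX)
        have hadj' : P.Adj (v, i) (v, j) := (sp_adj G _ _).mpr (Or.inl ⟨rfl, hne⟩)
        rw [hfibdef]
        simp only [Finset.mem_filter]
        refine ⟨?_, ?_⟩
        · rw [hsFdef, Set.Finite.mem_toFinset]
          exact hcross _ _ hadj' hiX hjX
        · rw [hprojdef, Sym2.map_pair_eq]
      have hinj : Set.InjOn (fun ij : Fin n × Fin n => s(((v, ij.1) : V × Fin n), (v, ij.2)))
          ↑(IX v ×ˢ (IX v)ᶜ) := by
        rintro ⟨i, j⟩ hij ⟨i', j'⟩ hij' heq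
        simp only [Finset.coe_product, Set.mem_prod, Finset.mem_coe, Finset.mem_compl] at hij hij'
        rcases Sym2.eq_iff.mp heq with ⟨h1, h2⟩ | ⟨h1, h2⟩
        · have e1 : i = i' := congrArg Prod.snd h1
          have e2 : j = j' := congrArg Prod.snd h2
          simp [e1, e2]
        · exfalso
          have e1 : i = j' := congrArg Prod.snd h1
          exact hij'.2 (e1 ▸ hij.1)
      calc av v * ((IX v)ᶜ).card = (IX v ×ˢ (IX v)ᶜ).card := by
            rw [Finset.card_product]
        _ ≤ (fib s(v, v)).card := Finset.card_le_card_of_injOn _ hmap hinj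
    have hfibcross : ∀ v w : V, G.Adj v w →
        av v * (n - av w) + av w * (n - av v) ≤ (fib s(v, w)).card := by
      intro v w hvw
      rw [← hbv v, ← hbv w]
      have hvwne : v ≠ w := hvw.ne
      set f : (Fin n × Fin n) → Sym2 (V × Fin n) :=
        fun ij => s((v, ij.1), (w, ij.2)) with hfdef
      have hfinj : Function.Injective f := by
        rintro ⟨i, j⟩ ⟨i', j'⟩ heq
        rcases Sym2.eq_iff.mp heq with ⟨h1, h2⟩ | ⟨h1, h2⟩
        · have e1 : i = i' := congrArg Prod.snd h1
          have e2 : j = j' := congrArg Prod.snd h2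
          simp [e1, e2]
        · exact absurd (congrArg Prod.fst h1) hvwne
      have hPadj : ∀ i j : Fin n, P.Adj (v, i) (w, j) :=
        fun i j => (sp_adj G _ _).mpr (Or.inr hvw)
      set D := (IX v ×ˢ (IX w)ᶜ).disjSum ((IX v)ᶜ ×ˢ IX w) with hDdef
      set φ : (Fin n × Fin n) ⊕ (Fin n × Fin n) → Sym2 (V × Fin n) :=
        Sum.elim f f with hφdef
      have hmap : ∀ z ∈ D, φ z ∈ fib s(v, w) := by
        rintro (⟨i, j⟩ | ⟨i, j⟩) hz
        · rw [hDdef, Finset.inl_mem_disjSum, Finset.mem_product, Finset.mem_compl] at hz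
          have hiX : (v, i) ∈ X := (hmemI v i).mp hz.1
          have hjX : (w, j) ∉ X := fun hc => hz.2 ((hmemI w j).mpr hc)
          rw [hφdef, hfibdef]
          simp only [Sum.elim_inl, Finset.mem_filter]
          refine ⟨?_, ?_⟩
          · rw [hsFdef, Set.Finite.mem_toFinset, hfdef]
            exact hcross _ _ (hPadj i j) hiX hjX
          · rw [hprojdef, hfdef, Sym2.map_pair_eq]
        · rw [hDdef, Finset.inr_mem_disjSum, Finset.mem_product, Finset.mem_compl] at hz
          have hiX : (v, i) ∉ X := fun hc => hz.1 ((hmemI v i).mpr hc)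
          have hjX : (w, j) ∈ X := (hmemI w j).mp hz.2
          rw [hφdef, hfibdef]
          simp only [Sum.elim_inr, Finset.mem_filter]
          refine ⟨?_, ?_⟩
          · rw [hsFdef, Set.Finite.mem_toFinset, hfdef]
            have := hcross _ _ (hPadj i j).symm hjX hiX
            rwa [Sym2.eq_swap] at this
          · rw [hprojdef, hfdef, Sym2.map_pair_eq]
      have hinj : Set.InjOn φ ↑D := by
        rintro (a | a) ha (b | b) hb heq
        · rw [hφdef] at heq
          simp only [Sum.elim_inl] at heq
          rw [hfinj heq]
        · exfalso
          rw [hφdef] at heq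
          simp only [Sum.elim_inl, Sum.elim_inr] at heq
          have hab : a = b := hfinj heq
          rw [Finset.mem_coe, hDdef, Finset.inl_mem_disjSum, Finset.mem_product] at ha
          rw [Finset.mem_coe, hDdef, Finset.inr_mem_disjSum, Finset.mem_product,
            Finset.mem_compl] at hb
          exact hb.1 (hab ▸ ha.1)
        · exfalso
          rw [hφdef] at heq
          simp only [Sum.elim_inl, Sum.elim_inr] at heq
          have hab : a = b := hfinj heq
          rw [Finset.mem_coe, hDdef, Finset.inl_mem_disjSum, Finset.mem_product] at hb
          rw [Finset.mem_coe, hDdef, Finset.inr_mem_disjSum, Finset.mem_product,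
            Finset.mem_compl] at ha
          exact ha.1 (hab ▸ hb.1)
        · rw [hφdef] at heq
          simp only [Sum.elim_inr] at heq
          rw [hfinj heq]
      calc av v * ((IX w)ᶜ).card + av w * ((IX v)ᶜ).card = D.card := by
            rw [hDdef, Finset.card_disjSum, Finset.card_product, Finset.card_product]
            ring
        _ ≤ (fib s(v, w)).card := Finset.card_le_card_of_injOn _ hmap hinj
    have hcut : ∀ A : Finset V, A.Nonempty → Aᶜ.Nonempty →
        edgeConn G ≤ (G.edgeFinset.filter
          (fun e => ∃ u ∈ A, ∃ w ∈ Aᶜ, e = s(u, w))).card := by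
      intro A hA hAc
      apply Nat.sInf_le
      refine ⟨↑(G.edgeFinset.filter (fun e => ∃ u ∈ A, ∃ w ∈ Aᶜ, e = s(u, w))), ?_, ?_, ?_⟩
      · intro e he
        rw [Finset.mem_coe, Finset.mem_filter] at he
        exact SimpleGraph.mem_edgeFinset.mp he.1
      · rw [Set.ncard_coe_finset]
      · intro hconn
        obtain ⟨u0, hu0⟩ := hA
        obtain ⟨w0, hw0⟩ := hAc
        have hclosedA : ∀ z y : V,
            (G.deleteEdges ↑(G.edgeFinset.filter
              (fun e => ∃ u ∈ A, ∃ w ∈ Aᶜ, e = s(u, w)))).Adj z y →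
            z ∈ (↑A : Set V) → y ∈ (↑A : Set V) := by
          intro z y hzy hz
          obtain ⟨hadj', hns⟩ := SimpleGraph.deleteEdges_adj.mp hzy
          by_contra hy
          apply hns
          rw [Finset.mem_coe, Finset.mem_filter]
          refine ⟨SimpleGraph.mem_edgeFinset.mpr hadj', z, ?_, y, ?_, rfl⟩
          · exact Finset.mem_coe.mp hz
          · rw [Finset.mem_compl]
            exact fun hc => hy (Finset.mem_coe.mpr hc)
        have hw0A := reachable_mem hclosedA (hconn.preconnected u0 w0)
          (Finset.mem_coe.mpr hu0)
        exact Finset.mem_compl.mp hw0 (Finset.mem_coe.mp hw0A)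
    have hlamδ : edgeConn G ≤ δ := by
      apply Nat.sInf_le
      refine ⟨G.incidenceSet v0, fun e he => he.1, ?_, ?_⟩
      · rw [ncard_incidenceSet]
        exact hv0
      · intro hconn
        obtain ⟨w0, hw0⟩ : ∃ w0 : V, w0 ≠ v0 := by
          by_contra hc
          push_neg at hc
          have hsub : (Finset.univ : Finset V) ⊆ {v0} := fun z _ => by simp [hc z]
          have hcard := Finset.card_le_card hsub
          rw [Finset.card_univ, hm] at hcard
          simp at hcard
          omega
        have hclosed0 : ∀ z y : V, (G.deleteEdges (G.incidenceSet v0)).Adj z y →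
            z ∈ ({v0} : Set V) → y ∈ ({v0} : Set V) := by
          intro z y hzy hz
          obtain ⟨hadj', hns⟩ := SimpleGraph.deleteEdges_adj.mp hzy
          exfalso
          refine hns ⟨G.mem_edgeSet.mpr hadj', ?_⟩
          rw [Set.mem_singleton_iff] at hz
          rw [← hz]
          exact Sym2.mem_mk_left z y
        have := reachable_mem hclosed0 (hconn.preconnected v0 w0) rfl
        exact hw0 this
    have hlam : 2 * n * δ + 2 * n - 4 ≤ n ^ 2 * edgeConn G :=
      le_trans h (min_le_left _ _)
    rw [hsF]
    set Splits : Finset V := Finset.univ.filter (fun v => 0 < av v ∧ av v < n) with hSpdef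
    have hdδ : ∀ v : V, δ ≤ deg G v := fun v => hδdef ▸ minDeg_le G v
    have hdegG : ∀ v : V, (G.neighborFinset v).card = deg G v := fun v => by
      rw [deg_eq_degree]; rfl
    have hinjs : ∀ v : V, ∀ (s' : Finset V) (a : V), a ∈ s' → ∀ b ∈ s',
        s(v, a) = s(v, b) → a = b := fun v _ a _ b _ hab => Sym2.congr_right.mp hab
    by_cases hsp : Splits = ∅
    · -- Case 1: no split cliques; compare with an n²·λ bound
      have hav01 : ∀ v : V, av v = 0 ∨ av v = n := by
        intro v
        by_contra hc
        push_neg at hc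
        have hvS : v ∈ Splits := by
          rw [hSpdef, Finset.mem_filter]
          exact ⟨Finset.mem_univ v, Nat.pos_of_ne_zero hc.1, lt_of_le_of_ne (havle v) hc.2⟩
        rw [hsp] at hvS
        exact Finset.notMem_empty v hvS
      have hIXn : ∀ v : V, av v = n → ∀ i, (v, i) ∈ X := by
        intro v hv i
        have huniv : IX v = Finset.univ :=
          (Finset.card_eq_iff_eq_univ _).mp (by rw [Fintype.card_fin]; exact hv)
        exact (hmemI v i).mp (by rw [huniv]; exact Finset.mem_univ i)
      have hIX0 : ∀ v : V, av v = 0 → ∀ i, (v, i) ∉ X := by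
        intro v hv i hc
        have h1 : i ∈ IX v := (hmemI v i).mpr hc
        rw [Finset.card_eq_zero.mp hv] at h1
        exact Finset.notMem_empty i h1
      set A : Finset V := Finset.univ.filter (fun v => av v = n) with hAdef
      have hpA : p.1 ∈ A := by
        rw [hAdef, Finset.mem_filter]
        refine ⟨Finset.mem_univ _, ?_⟩
        rcases hav01 p.1 with h0 | hn'
        · exact absurd hpX (by simpa using hIX0 p.1 h0 p.2)
        · exact hn'
      have hqA : q.1 ∈ Aᶜ := by
        rw [Finset.mem_compl, hAdef, Finset.mem_filter]
        rintro ⟨-, hqn⟩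
        exact hqX (by simpa using hIXn q.1 hqn q.2)
      have hcut1 := hcut A ⟨p.1, hpA⟩ ⟨q.1, hqA⟩
      have hfibT : ∀ e ∈ G.edgeFinset.filter (fun e => ∃ u ∈ A, ∃ w ∈ Aᶜ, e = s(u, w)),
          n * n ≤ (fib e).card := by
        intro e he
        rw [Finset.mem_filter] at he
        obtain ⟨he1, u, hu, w, hw, heq⟩ := he
        subst heq
        have hGuw : G.Adj u w := G.mem_edgeSet.mp (SimpleGraph.mem_edgeFinset.mp he1)
        have hau : av u = n := by
          rw [hAdef, Finset.mem_filter] at hu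
          exact hu.2
        have haw : av w = 0 := by
          rcases hav01 w with h0 | hn'
          · exact h0
          · exfalso
            rw [Finset.mem_compl, hAdef, Finset.mem_filter] at hw
            exact hw ⟨Finset.mem_univ _, hn'⟩
        calc n * n = av u * (n - av w) + av w * (n - av u) := by rw [hau, haw]; simp
          _ ≤ (fib s(u, w)).card := hfibcross u w hGuw
      calc 2 * n * δ + 2 * n - 4 ≤ n ^ 2 * edgeConn G := hlam
        _ ≤ n ^ 2 * (G.edgeFinset.filter (fun e => ∃ u ∈ A, ∃ w ∈ Aᶜ, e = s(u, w))).card :=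
          Nat.mul_le_mul_left _ hcut1
        _ = ∑ _e ∈ G.edgeFinset.filter (fun e => ∃ u ∈ A, ∃ w ∈ Aᶜ, e = s(u, w)), n * n := by
          rw [Finset.sum_const, smul_eq_mul]; ring
        _ ≤ ∑ e ∈ G.edgeFinset.filter (fun e => ∃ u ∈ A, ∃ w ∈ Aᶜ, e = s(u, w)),
            (fib e).card := Finset.sum_le_sum hfibT
        _ ≤ sF.card := hkey _
    by_cases hadjsp : ∃ v ∈ Splits, ∃ w ∈ Splits, G.Adj v w
    · -- Case 2: two adjacent split cliques
      obtain ⟨v, hv, w, hw, hvw⟩ := hadjsp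
      rw [hSpdef, Finset.mem_filter] at hv hw
      obtain ⟨-, hv1, hv2⟩ := hv
      obtain ⟨-, hw1, hw2⟩ := hw
      have hvwne : v ≠ w := hvw.ne
      have hwNv : w ∈ G.neighborFinset v := by
        rw [SimpleGraph.mem_neighborFinset]; exact hvw
      have hvNw : v ∈ G.neighborFinset w := by
        rw [SimpleGraph.mem_neighborFinset]; exact hvw.symm
      have hvnN : v ∉ G.neighborFinset v := fun hc =>
        G.irrefl ((SimpleGraph.mem_neighborFinset _ _ _).mp hc)
      have hwnN : w ∉ (G.neighborFinset w).erase v := fun hc =>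
        G.irrefl ((SimpleGraph.mem_neighborFinset _ _ _).mp (Finset.mem_erase.mp hc).2)
      set T1 := (insert v (G.neighborFinset v)).image (fun u => s(v, u)) with hT1def
      set T2 := (insert w ((G.neighborFinset w).erase v)).image (fun u => s(w, u)) with hT2def
      have hdisj : Disjoint T1 T2 := by
        rw [Finset.disjoint_left]
        intro e he1 he2
        rw [hT1def, Finset.mem_image] at he1
        rw [hT2def, Finset.mem_image] at he2
        obtain ⟨u1, hu1, heq1⟩ := he1
        obtain ⟨u2, hu2, heq2⟩ := he2
        rw [← heq2] at heq1
        rcases Sym2.eq_iff.mp heq1 with ⟨h1, h2⟩ | ⟨h1, h2⟩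
        · exact hvwne h1
        · rw [← h1] at hu2
          rcases Finset.mem_insert.mp hu2 with hc | hc
          · exact hvwne hc
          · exact (Finset.mem_erase.mp hc).1 rfl
      have hsum1 : ∑ e ∈ T1, (fib e).card = (fib s(v, v)).card +
          ((fib s(v, w)).card + ∑ u ∈ (G.neighborFinset v).erase w, (fib s(v, u)).card) := by
        rw [hT1def, Finset.sum_image (hinjs v _), Finset.sum_insert hvnN,
          ← Finset.add_sum_erase _ _ hwNv]
      have hsum2 : ∑ e ∈ T2, (fib e).card = (fib s(w, w)).card +
          ∑ u ∈ (G.neighborFinset w).erase v, (fib s(w, u)).card := by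
        rw [hT2def, Finset.sum_image (hinjs w _), Finset.sum_insert hwnN]
      have hb1 : n - 1 ≤ (fib s(v, v)).card :=
        le_trans (num_loop (by omega) (by omega) (by have := havle v; omega)) (hfibloop v)
      have hb1' : n - 1 ≤ (fib s(w, w)).card :=
        le_trans (num_loop (by omega) (by omega) (by have := havle w; omega)) (hfibloop w)
      have hb2 : n + n - 2 ≤ (fib s(v, w)).card :=
        le_trans (num_cross_ss (by omega) (by omega) (by omega) (by omega)
          (by have := havle v; omega) (by have := havle w; omega)) (hfibcross v w hvw)
      have hb3 : ∀ u ∈ (G.neighborFinset v).erase w, n ≤ (fib s(v, u)).card := by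
        intro u hu
        have hGu : G.Adj v u := (SimpleGraph.mem_neighborFinset _ _ _).mp (Finset.mem_erase.mp hu).2
        exact le_trans (num_cross_any (by omega) (by omega) (by have := havle v; omega)
          (by have := havle u; omega)) (hfibcross v u hGu)
      have hb4 : ∀ u ∈ (G.neighborFinset w).erase v, n ≤ (fib s(w, u)).card := by
        intro u hu
        have hGu : G.Adj w u := (SimpleGraph.mem_neighborFinset _ _ _).mp (Finset.mem_erase.mp hu).2
        exact le_trans (num_cross_any (by omega) (by omega) (by have := havle w; omega)
          (by have := havle u; omega)) (hfibcross w u hGu)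
      have hs3 := Finset.card_nsmul_le_sum ((G.neighborFinset v).erase w) _ n hb3
      have hs4 := Finset.card_nsmul_le_sum ((G.neighborFinset w).erase v) _ n hb4
      rw [Finset.card_erase_of_mem hwNv, hdegG, smul_eq_mul] at hs3
      rw [Finset.card_erase_of_mem hvNw, hdegG, smul_eq_mul] at hs4
      have h1v : 1 ≤ deg G v := by
        rw [← hdegG]
        exact Finset.card_pos.mpr ⟨w, hwNv⟩
      have h1w : 1 ≤ deg G w := by
        rw [← hdegG]
        exact Finset.card_pos.mpr ⟨v, hvNw⟩
      have htot : ∑ e ∈ T1 ∪ T2, (fib e).card ≤ sF.card := hkey _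
      rw [Finset.sum_union hdisj, hsum1, hsum2] at htot
      apply arith2 hn (hdδ v) (hdδ w) h1v h1w
      calc (n - 1) + ((n + n - 2) + (deg G v - 1) * n) + ((n - 1) + (deg G w - 1) * n)
          ≤ (fib s(v, v)).card + ((fib s(v, w)).card +
            ∑ u ∈ (G.neighborFinset v).erase w, (fib s(v, u)).card) +
            ((fib s(w, w)).card + ∑ u ∈ (G.neighborFinset w).erase v, (fib s(w, u)).card) := by
            refine Nat.add_le_add (Nat.add_le_add hb1 (Nat.add_le_add hb2 hs3))
              (Nat.add_le_add hb1' hs4)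
        _ ≤ sF.card := htot
    by_cases hbig : ∃ v ∈ Splits, 2 ≤ av v ∧ av v + 2 ≤ n
    · -- Case 3: a strongly split clique
      obtain ⟨v, hv, hv2, hv2'⟩ := hbig
      have hvnN : v ∉ G.neighborFinset v := fun hc =>
        G.irrefl ((SimpleGraph.mem_neighborFinset _ _ _).mp hc)
      set T1 := (insert v (G.neighborFinset v)).image (fun u => s(v, u)) with hT1def
      have hsum1 : ∑ e ∈ T1, (fib e).card = (fib s(v, v)).card +
          ∑ u ∈ G.neighborFinset v, (fib s(v, u)).card := by
        rw [hT1def, Finset.sum_image (hinjs v _), Finset.sum_insert hvnN]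
      have hb1 : 2 * n - 4 ≤ (fib s(v, v)).card :=
        le_trans (num_loop2 hv2 (by omega) (by have := havle v; omega)) (hfibloop v)
      have hb3 : ∀ u ∈ G.neighborFinset v, 2 * n ≤ (fib s(v, u)).card := by
        intro u hu
        have hGu : G.Adj v u := (SimpleGraph.mem_neighborFinset _ _ _).mp hu
        exact le_trans (num_cross2 hv2 (by omega) (by have := havle v; omega)
          (by have := havle u; omega)) (hfibcross v u hGu)
      have hs3 := Finset.card_nsmul_le_sum (G.neighborFinset v) _ (2 * n) hb3
      rw [hdegG, smul_eq_mul] at hs3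
      have htot : ∑ e ∈ T1, (fib e).card ≤ sF.card := hkey _
      rw [hsum1] at htot
      apply arith3 hn (hdδ v)
      calc (2 * n - 4) + deg G v * (2 * n)
          ≤ (fib s(v, v)).card + ∑ u ∈ G.neighborFinset v, (fib s(v, u)).card :=
            Nat.add_le_add hb1 hs3
        _ ≤ sF.card := htot
    · -- Case 4: splits are independent and all have minority size 1
      push_neg at hadjsp hbig
      have hSpmem : ∀ v : V, v ∈ Splits ↔ (0 < av v ∧ av v < n) := by
        intro v
        rw [hSpdef]
        simp
      have hns : ∀ v : V, v ∉ Splits → av v = 0 ∨ av v = n := by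
        intro v hv
        by_contra hc
        push_neg at hc
        exact hv ((hSpmem v).mpr ⟨Nat.pos_of_ne_zero hc.1, lt_of_le_of_ne (havle v) hc.2⟩)
      have hsplit1 : ∀ v ∈ Splits, av v = 1 ∨ av v + 1 = n := by
        intro v hv
        have h1 := (hSpmem v).mp hv
        by_cases h2 : 2 ≤ av v
        · have := hbig v hv h2
          omega
        · omega
      have hIXn : ∀ v : V, av v = n → ∀ i, (v, i) ∈ X := by
        intro v hv i
        have huniv : IX v = Finset.univ :=
          (Finset.card_eq_iff_eq_univ _).mp (by rw [Fintype.card_fin]; exact hv)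
        exact (hmemI v i).mp (by rw [huniv]; exact Finset.mem_univ i)
      set A : Finset V := Finset.univ.filter (fun v => n - 1 ≤ av v) with hAdef
      have hAmem : ∀ v : V, v ∈ A ↔ n - 1 ≤ av v := by
        intro v
        rw [hAdef]
        simp
      -- A is nonempty
      have hApne : A.Nonempty := by
        by_contra hc
        rw [Finset.not_nonempty_iff_eq_empty] at hc
        have hall : ∀ v : V, av v ≤ 1 := by
          intro v
          by_contra h2
          push_neg at h2
          have hvA : v ∈ A := by
            rw [hAmem]
            rcases Nat.lt_or_ge (av v) n with hlt | hge
            · have hvS : v ∈ Splits := (hSpmem v).mpr ⟨by omega, hlt⟩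
              have := hbig v hvS (by omega)
              omega
            · omega
          rw [hc] at hvA
          exact Finset.notMem_empty v hvA
        obtain ⟨z, hzadj, hziff⟩ := hside p
        have hzX : z ∈ X := hziff.mpr hpX
        have hPadj : P.Adj p z := (SimpleGraph.deleteEdges_adj.mp hzadj).1
        rcases (sp_adj G p z).mp hPadj with ⟨h1, h2⟩ | hGadj
        · have hc1 : p.2 ∈ IX p.1 := (hmemI _ _).mpr (by simpa using hpX)
          have hc2 : z.2 ∈ IX p.1 := (hmemI _ _).mpr (by rw [h1]; simpa using hzX)
          have : 2 ≤ av p.1 := Finset.one_lt_card.mpr ⟨p.2, hc1, z.2, hc2, h2⟩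
          exact absurd (hall p.1) (by omega)
        · have hp1 : 0 < av p.1 :=
            Finset.card_pos.mpr ⟨p.2, (hmemI _ _).mpr (by simpa using hpX)⟩
          have hz1 : 0 < av z.1 :=
            Finset.card_pos.mpr ⟨z.2, (hmemI _ _).mpr (by simpa using hzX)⟩
          have hpS : p.1 ∈ Splits := (hSpmem _).mpr ⟨hp1, by have := hall p.1; omega⟩
          have hzS : z.1 ∈ Splits := (hSpmem _).mpr ⟨hz1, by have := hall z.1; omega⟩
          exact hadjsp p.1 hpS z.1 hzS hGadj
      -- Aᶜ is nonempty
      have hBne : Aᶜ.Nonempty := by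
        by_contra hc
        rw [Finset.not_nonempty_iff_eq_empty, Finset.compl_eq_empty_iff] at hc
        have hall : ∀ v : V, n - 1 ≤ av v := by
          intro v
          exact (hAmem v).mp (hc ▸ Finset.mem_univ v)
        obtain ⟨z, hzadj, hziff⟩ := hside q
        have hzX : z ∉ X := fun hzz => hqX (hziff.mp hzz)
        have hPadj : P.Adj q z := (SimpleGraph.deleteEdges_adj.mp hzadj).1
        have hq2 : q.2 ∈ (IX q.1)ᶜ := Finset.mem_compl.mpr
          (fun hcc => hqX (by simpa using (hmemI _ _).mp hcc))
        rcases (sp_adj G q z).mp hPadj with ⟨h1, h2⟩ | hGadj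
        · have hc2 : z.2 ∈ (IX q.1)ᶜ := Finset.mem_compl.mpr (fun hcc =>
            hzX (by rw [show z = (q.1, z.2) from Prod.ext h1.symm rfl];
                    exact (hmemI _ _).mp hcc))
          have h2c : 2 ≤ ((IX q.1)ᶜ).card := Finset.one_lt_card.mpr ⟨q.2, hq2, z.2, hc2, h2⟩
          rw [hbv q.1] at h2c
          have := hall q.1
          have := havle q.1
          omega
        · have hq1 : av q.1 < n := by
            have h0 : 0 < ((IX q.1)ᶜ).card := Finset.card_pos.mpr ⟨q.2, hq2⟩
            rw [hbv q.1] at h0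
            omega
          have hz2 : z.2 ∈ (IX z.1)ᶜ := Finset.mem_compl.mpr
            (fun hcc => hzX (by simpa using (hmemI _ _).mp hcc))
          have hz1 : av z.1 < n := by
            have h0 : 0 < ((IX z.1)ᶜ).card := Finset.card_pos.mpr ⟨z.2, hz2⟩
            rw [hbv z.1] at h0
            omega
          have hqS : q.1 ∈ Splits := (hSpmem _).mpr ⟨by have := hall q.1; omega, hq1⟩
          have hzS : z.1 ∈ Splits := (hSpmem _).mpr ⟨by have := hall z.1; omega, hz1⟩
          exact hadjsp q.1 hqS z.1 hzS hGadj
      -- every split clique has a cross-side neighbour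
      have hcrossnbr : ∀ v ∈ Splits, ∃ w, G.Adj v w ∧ ¬(w ∈ A ↔ v ∈ A) := by
        intro v hvS
        rcases hsplit1 v hvS with h1 | hnm1
        · -- av v = 1
          have hvnA : v ∉ A := by rw [hAmem]; omega
          obtain ⟨i, hi⟩ : ∃ i, i ∈ IX v := Finset.card_pos.mp (show 0 < av v by omega)
          have hiX : (v, i) ∈ X := (hmemI _ _).mp hi
          obtain ⟨z, hzadj, hziff⟩ := hside (v, i)
          have hzX : z ∈ X := hziff.mpr hiX
          have hPadj : P.Adj (v, i) z := (SimpleGraph.deleteEdges_adj.mp hzadj).1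
          rcases (sp_adj G _ z).mp hPadj with ⟨hh1, hh2⟩ | hGadj
          · exfalso
            have hc2 : z.2 ∈ IX v := (hmemI _ _).mpr
              (by rw [show z = (v, z.2) from Prod.ext hh1.symm rfl] at hzX; exact hzX)
            have : 2 ≤ av v := Finset.one_lt_card.mpr ⟨i, hi, z.2, hc2, hh2⟩
            omega
          · refine ⟨z.1, hGadj, ?_⟩
            have hz1 : 0 < av z.1 :=
              Finset.card_pos.mpr ⟨z.2, (hmemI _ _).mpr (by simpa using hzX)⟩
            have hznS : z.1 ∉ Splits := fun hcc => hadjsp v hvS z.1 hcc hGadj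
            have hzn : av z.1 = n := by
              rcases hns z.1 hznS with h0 | hN
              · omega
              · exact hN
            intro hiff
            exact hvnA (hiff.mp ((hAmem z.1).mpr (by omega)))
        · -- av v = n - 1
          have hvA : v ∈ A := by rw [hAmem]; omega
          obtain ⟨i, hi⟩ : ∃ i, i ∈ (IX v)ᶜ := Finset.card_pos.mp
            (by rw [hbv v]; omega)
          have hiX : (v, i) ∉ X := fun hcc => Finset.mem_compl.mp hi ((hmemI _ _).mpr hcc)
          obtain ⟨z, hzadj, hziff⟩ := hside (v, i)
          have hzX : z ∉ X := fun hzz => hiX (hziff.mp hzz)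
          have hPadj : P.Adj (v, i) z := (SimpleGraph.deleteEdges_adj.mp hzadj).1
          rcases (sp_adj G _ z).mp hPadj with ⟨hh1, hh2⟩ | hGadj
          · exfalso
            have hc2 : z.2 ∈ (IX v)ᶜ := Finset.mem_compl.mpr (fun hcc =>
              hzX (by rw [show z = (v, z.2) from Prod.ext hh1.symm rfl];
                      exact (hmemI _ _).mp hcc))
            have h2c : 2 ≤ ((IX v)ᶜ).card := Finset.one_lt_card.mpr ⟨i, hi, z.2, hc2, hh2⟩
            rw [hbv v] at h2c
            omega
          · refine ⟨z.1, hGadj, ?_⟩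
            have hz2 : z.2 ∈ (IX z.1)ᶜ := Finset.mem_compl.mpr
              (fun hcc => hzX (by simpa using (hmemI _ _).mp hcc))
            have hz1 : av z.1 < n := by
              have h0 : 0 < ((IX z.1)ᶜ).card := Finset.card_pos.mpr ⟨z.2, hz2⟩
              rw [hbv z.1] at h0
              omega
            have hznS : z.1 ∉ Splits := fun hcc => hadjsp v hvS z.1 hcc hGadj
            have hz0 : av z.1 = 0 := by
              rcases hns z.1 hznS with h0 | hN
              · exact h0
              · omega
            intro hiff
            exact absurd ((hAmem z.1).mp (hiff.mpr hvA)) (by omega)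
      -- values of av on the two sides
      have hvalA : ∀ v ∈ A, v ∉ Splits → av v = n := by
        intro v hvA hvnS
        rcases hns v hvnS with h0 | hN
        · rw [hAmem] at hvA
          omega
        · exact hN
      have hvalB : ∀ v, v ∉ A → v ∉ Splits → av v = 0 := by
        intro v hvA hvnS
        rcases hns v hvnS with h0 | hN
        · exact h0
        · exfalso
          exact hvA ((hAmem v).mpr (by omega))
      have hvalSA : ∀ v ∈ A, v ∈ Splits → av v + 1 = n := by
        intro v hvA hvS
        rcases hsplit1 v hvS with h1 | hnm1
        · rw [hAmem] at hvA
          omega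
        · exact hnm1
      have hvalSB : ∀ v, v ∉ A → v ∈ Splits → av v = 1 := by
        intro v hvA hvS
        rcases hsplit1 v hvS with h1 | hnm1
        · exact h1
        · exfalso
          exact hvA ((hAmem v).mpr (by omega))
      -- neighbour partitions of split cliques
      set Nc : V → Finset V := fun v =>
        (G.neighborFinset v).filter (fun u => ¬(u ∈ A ↔ v ∈ A)) with hNcdef
      set Ns : V → Finset V := fun v =>
        (G.neighborFinset v).filter (fun u => (u ∈ A ↔ v ∈ A)) with hNsdef
      have hNcNs : ∀ v : V, (Nc v).card + (Ns v).card = deg G v := by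
        intro v
        rw [hNcdef, hNsdef, add_comm, ← hdegG v]
        exact Finset.card_filter_add_card_filter_not _
      have hkv : ∀ v ∈ Splits, 1 ≤ (Nc v).card := by
        intro v hv
        obtain ⟨w, hw1, hw2⟩ := hcrossnbr v hv
        refine Finset.card_pos.mpr ⟨w, ?_⟩
        rw [hNcdef, Finset.mem_filter, SimpleGraph.mem_neighborFinset]
        exact ⟨hw1, hw2⟩
      -- fibre bounds
      have hloopb : ∀ v ∈ Splits, n - 1 ≤ (fib s(v, v)).card := by
        intro v hv
        have h1 := (hSpmem v).mp hv
        exact le_trans (num_loop (by omega) (by omega) (by have := havle v; omega)) (hfibloop v)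
      have hsameb : ∀ v ∈ Splits, ∀ u ∈ Ns v, n ≤ (fib s(v, u)).card := by
        intro v hv u hu
        have h1 := (hSpmem v).mp hv
        rw [hNsdef, Finset.mem_filter, SimpleGraph.mem_neighborFinset] at hu
        exact le_trans (num_cross_any (by omega) (by omega) (by have := havle v; omega)
          (by have := havle u; omega)) (hfibcross v u hu.1)
      have hcrossb : ∀ v ∈ Splits, ∀ u ∈ Nc v, n * (n - 1) ≤ (fib s(v, u)).card := by
        intro v hv u hu
        rw [hNcdef, Finset.mem_filter, SimpleGraph.mem_neighborFinset] at hu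
        obtain ⟨hGadj, hop⟩ := hu
        have hunS : u ∉ Splits := fun hcc => hadjsp v hv u hcc hGadj
        refine le_trans ?_ (hfibcross v u hGadj)
        by_cases hvA : v ∈ A
        · have h1 : av v + 1 = n := hvalSA v hvA hv
          have h2 : av u = 0 := hvalB u (fun huA => hop (iff_of_true huA hvA)) hunS
          rw [h2, Nat.sub_zero, Nat.zero_mul, Nat.add_zero,
            show av v = n - 1 by omega, Nat.mul_comm]
        · have h1 : av v = 1 := hvalSB v hvA hv
          have huA : u ∈ A := by
            by_contra h3
            exact hop (iff_of_false h3 hvA)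
          have hau : av u = n := hvalA u huA hunS
          rw [h1, hau, Nat.sub_self, Nat.mul_zero, Nat.zero_add]
      -- big union of fibres around split cliques
      set TS : Finset (Sym2 V) := Splits.biUnion
        (fun v => (insert v (G.neighborFinset v)).image (fun u => s(v, u))) with hTSdef
      have hpair : (↑Splits : Set V).PairwiseDisjoint
          (fun v => (insert v (G.neighborFinset v)).image (fun u => s(v, u))) := by
        intro a ha b hb hab
        rw [Function.onFun, Finset.disjoint_left]
        intro e he1 he2
        rw [Finset.mem_image] at he1 he2
        obtain ⟨u1, hu1, heq1⟩ := he1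
        obtain ⟨u2, hu2, heq2⟩ := he2
        rw [← heq2] at heq1
        rcases Sym2.eq_iff.mp heq1 with ⟨h1, h2⟩ | ⟨h1, h2⟩
        · exact hab h1
        · rw [← h1] at hu2
          rcases Finset.mem_insert.mp hu2 with hc | hc
          · exact hab hc
          · exact hadjsp b (Finset.mem_coe.mp hb) a (Finset.mem_coe.mp ha)
              ((SimpleGraph.mem_neighborFinset _ _ _).mp hc)
      have hsumTS : ∑ e ∈ TS, (fib e).card =
          ∑ v ∈ Splits, ∑ u ∈ insert v (G.neighborFinset v), (fib s(v, u)).card := by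
        rw [hTSdef, Finset.sum_biUnion hpair]
        exact Finset.sum_congr rfl (fun v _ => Finset.sum_image (hinjs v _))
      -- the A-cut and its split / non-split parts
      set TC : Finset (Sym2 V) := G.edgeFinset.filter
        (fun e => ∃ u ∈ A, ∃ w ∈ Aᶜ, e = s(u, w)) with hTCdef
      set pns : Sym2 V → Prop := fun e => ∀ z ∈ e, z ∉ Splits with hpnsdef
      set TF : Finset (Sym2 V) := TC.filter pns with hTFdef
      have hTCsplit : (TC.filter (fun e => ¬ pns e)).card ≤ ∑ v ∈ Splits, (Nc v).card := by
        have hsub : TC.filter (fun e => ¬ pns e) ⊆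
            Splits.biUnion (fun v => (Nc v).image (fun u => s(v, u))) := by
          intro e he
          rw [Finset.mem_filter] at he
          obtain ⟨heC, hnp⟩ := he
          simp only [hpnsdef] at hnp
          push_neg at hnp
          obtain ⟨z, hze, hzS⟩ := hnp
          rw [hTCdef, Finset.mem_filter] at heC
          obtain ⟨hee, u, hu, w, hw, heq⟩ := heC
          subst heq
          have hGadj : G.Adj u w := G.mem_edgeSet.mp (SimpleGraph.mem_edgeFinset.mp hee)
          have hwA : w ∉ A := Finset.mem_compl.mp hw
          rw [Finset.mem_biUnion]
          rcases Sym2.mem_iff.mp hze with rfl | rfl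
          · refine ⟨z, hzS, ?_⟩
            rw [Finset.mem_image]
            refine ⟨w, ?_, rfl⟩
            rw [hNcdef, Finset.mem_filter, SimpleGraph.mem_neighborFinset]
            exact ⟨hGadj, fun hiff => hwA (hiff.mpr hu)⟩
          · refine ⟨z, hzS, ?_⟩
            rw [Finset.mem_image]
            refine ⟨u, ?_, Sym2.eq_swap⟩
            rw [hNcdef, Finset.mem_filter, SimpleGraph.mem_neighborFinset]
            exact ⟨hGadj.symm, fun hiff => hwA (hiff.mp hu)⟩
        calc (TC.filter (fun e => ¬ pns e)).card
            ≤ (Splits.biUnion (fun v => (Nc v).image (fun u => s(v, u)))).card :=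
              Finset.card_le_card hsub
          _ ≤ ∑ v ∈ Splits, ((Nc v).image (fun u => s(v, u))).card := Finset.card_biUnion_le
          _ ≤ ∑ v ∈ Splits, (Nc v).card :=
              Finset.sum_le_sum (fun v _ => Finset.card_image_le)
      have hlamle : edgeConn G ≤ TF.card + ∑ v ∈ Splits, (Nc v).card := by
        have h1 : edgeConn G ≤ TC.card := hcut A hApne hBne
        have h2 : TF.card + (TC.filter (fun e => ¬ pns e)).card = TC.card := by
          rw [hTFdef]
          exact Finset.card_filter_add_card_filter_not _
        omega
      have hdisjSF : Disjoint TS TF := by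
        rw [Finset.disjoint_left]
        intro e he1 he2
        rw [hTSdef, Finset.mem_biUnion] at he1
        obtain ⟨v, hvS, hv2⟩ := he1
        rw [Finset.mem_image] at hv2
        obtain ⟨u, hu, heq⟩ := hv2
        rw [hTFdef, Finset.mem_filter] at he2
        have hp := he2.2
        rw [hpnsdef] at hp
        exact hp v (by rw [← heq]; exact Sym2.mem_mk_left v u) hvS
      have hinner : ∀ v ∈ Splits,
          (n - 1) + ((Nc v).card * (n * (n - 1)) + (Ns v).card * n) ≤
          ∑ u ∈ insert v (G.neighborFinset v), (fib s(v, u)).card := by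
        intro v hv
        have hvnN : v ∉ G.neighborFinset v := fun hc =>
          G.irrefl ((SimpleGraph.mem_neighborFinset _ _ _).mp hc)
        rw [Finset.sum_insert hvnN]
        refine Nat.add_le_add (hloopb v hv) ?_
        have hsplitN : ∑ u ∈ G.neighborFinset v, (fib s(v, u)).card =
            ∑ u ∈ Ns v, (fib s(v, u)).card + ∑ u ∈ Nc v, (fib s(v, u)).card := by
          rw [hNsdef, hNcdef]
          exact (Finset.sum_filter_add_sum_filter_not (G.neighborFinset v)
            (fun u => (u ∈ A ↔ v ∈ A)) _).symm
        rw [hsplitN]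
        have hc1 : (Nc v).card * (n * (n - 1)) ≤ ∑ u ∈ Nc v, (fib s(v, u)).card := by
          have := Finset.card_nsmul_le_sum (Nc v) _ (n * (n - 1)) (hcrossb v hv)
          rwa [smul_eq_mul] at this
        have hc2 : (Ns v).card * n ≤ ∑ u ∈ Ns v, (fib s(v, u)).card := by
          have := Finset.card_nsmul_le_sum (Ns v) _ n (hsameb v hv)
          rwa [smul_eq_mul] at this
        omega
      have hTFb : ∀ e ∈ TF, n * n ≤ (fib e).card := by
        intro e he
        rw [hTFdef, Finset.mem_filter] at he
        obtain ⟨heC, hp⟩ := he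
        rw [hTCdef, Finset.mem_filter] at heC
        obtain ⟨hee, u, hu, w, hw, heq⟩ := heC
        subst heq
        have hGadj : G.Adj u w := G.mem_edgeSet.mp (SimpleGraph.mem_edgeFinset.mp hee)
        rw [hpnsdef] at hp
        have hunS : u ∉ Splits := hp u (Sym2.mem_mk_left u w)
        have hwnS : w ∉ Splits := hp w (Sym2.mem_mk_right u w)
        have hau : av u = n := hvalA u hu hunS
        have haw : av w = 0 := hvalB w (Finset.mem_compl.mp hw) hwnS
        refine le_trans ?_ (hfibcross u w hGadj)
        rw [hau, haw, Nat.sub_zero, Nat.zero_mul, Nat.add_zero]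
      -- final assembly
      have htot : ∑ e ∈ TS ∪ TF, (fib e).card ≤ sF.card := hkey _
      rw [Finset.sum_union hdisjSF, hsumTS] at htot
      have hTSsum : ∑ v ∈ Splits, ((n - 1) + ((Nc v).card * (n * (n - 1)) + (Ns v).card * n)) ≤
          ∑ v ∈ Splits, ∑ u ∈ insert v (G.neighborFinset v), (fib s(v, u)).card :=
        Finset.sum_le_sum hinner
      have hTFsum : TF.card * (n * n) ≤ ∑ e ∈ TF, (fib e).card := by
        have := Finset.card_nsmul_le_sum TF _ (n * n) hTFb
        rwa [smul_eq_mul] at this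
      have hexp : ∑ v ∈ Splits, ((n - 1) + ((Nc v).card * (n * (n - 1)) + (Ns v).card * n)) =
          Splits.card * (n - 1) + ((∑ v ∈ Splits, (Nc v).card) * (n * (n - 1)) +
            (∑ v ∈ Splits, (Ns v).card) * n) := by
        rw [Finset.sum_add_distrib, Finset.sum_add_distrib, Finset.sum_const, smul_eq_mul,
          ← Finset.sum_mul, ← Finset.sum_mul]
      have hs1 : 1 ≤ Splits.card := Finset.card_pos.mpr (Finset.nonempty_of_ne_empty hsp)
      have hKge : Splits.card ≤ ∑ v ∈ Splits, (Nc v).card := by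
        have := Finset.card_nsmul_le_sum Splits _ 1 hkv
        simpa using this
      have hKL : Splits.card * δ ≤ (∑ v ∈ Splits, (Nc v).card) + ∑ v ∈ Splits, (Ns v).card := by
        rw [← Finset.sum_add_distrib]
        have := Finset.card_nsmul_le_sum Splits (fun v => (Nc v).card + (Ns v).card) δ
          (fun v _ => by show δ ≤ (Nc v).card + (Ns v).card; rw [hNcNs v]; exact hdδ v)
        rwa [smul_eq_mul] at this
      exact arith4 hn hs1 hKge hKL hlamle hlamδ hlam (by omega)
  rw [hξ, restEdgeConn]
  apply le_antisymm
  · exact Nat.sInf_le ⟨hub.choose, hub.choose_spec.1, hub.choose_spec.2⟩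
  · refine le_csInf ⟨_, hub.choose, hub.choose_spec⟩ ?_
    rintro k ⟨S, hS, rfl⟩
    exact hlb S hS
end

section
/- Let G and H be connected simple graphs, each with at least one edge. Then the minimum edge-degree of their strong product satisfies ξ(G ⊠ H) = min{ξ(G)·δ(H) + 4·δ(H) + ξ(G), δ(G)·ξ(H) + 4·δ(G) + ξ(H)}. -/
section Aux

variable {V W : Type*} [Fintype V] [Fintype W]

lemma ncard_prod' {α β : Type*} (s : Set α) (t : Set β) :
    (s ×ˢ t).ncard = s.ncard * t.ncard := by
  calc (s ×ˢ t).ncard = Nat.card (s ×ˢ t) := (Nat.card_coe_set_eq _).symm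
    _ = Nat.card (s × t) := Nat.card_congr (Equiv.Set.prod s t)
    _ = Nat.card s * Nat.card t := Nat.card_prod _ _
    _ = s.ncard * t.ncard := by rw [Nat.card_coe_set_eq, Nat.card_coe_set_eq]

lemma deg_strongProd (G : SimpleGraph V) (H : SimpleGraph W) (u : V) (w : W) :
    deg (strongProd G H) (u, w) = deg G u * deg H w + deg G u + deg H w := by
  have hset : (strongProd G H).neighborSet (u, w) =
      ((insert u (G.neighborSet u)) ×ˢ (insert w (H.neighborSet w))) \ {(u, w)} := by
    ext ⟨x, y⟩
    have hGu : ¬ G.Adj u u := G.irrefl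
    have hHw : ¬ H.Adj w w := H.irrefl
    simp only [SimpleGraph.mem_neighborSet, strongProd, Set.mem_diff, Set.mem_prod,
      Set.mem_insert_iff, SimpleGraph.mem_neighborSet, Set.mem_singleton_iff, Prod.mk.injEq]
    constructor
    · rintro (⟨h1, h2⟩ | ⟨h1, h2⟩ | ⟨h1, h2⟩)
      · exact ⟨⟨Or.inl h1.symm, Or.inr h2⟩, fun ⟨hx, hy⟩ => hHw (hy ▸ h2)⟩
      · exact ⟨⟨Or.inr h2, Or.inl h1.symm⟩, fun ⟨hx, hy⟩ => hGu (hx ▸ h2)⟩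
      · exact ⟨⟨Or.inr h1, Or.inr h2⟩, fun ⟨hx, hy⟩ => hGu (hx ▸ h1)⟩
    · rintro ⟨⟨hx | hx, hy | hy⟩, hne⟩
      · exact absurd ⟨hx, hy⟩ hne
      · exact Or.inl ⟨hx.symm, hy⟩
      · exact Or.inr (Or.inl ⟨hy.symm, hx⟩)
      · exact Or.inr (Or.inr ⟨hx, hy⟩)
  have hmem : (u, w) ∈ (insert u (G.neighborSet u)) ×ˢ (insert w (H.neighborSet w)) := by
    simp
  have e1 : (insert u (G.neighborSet u)).ncard = (G.neighborSet u).ncard + 1 :=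
    Set.ncard_insert_of_notMem (by simp) (Set.toFinite _)
  have e2 : (insert w (H.neighborSet w)).ncard = (H.neighborSet w).ncard + 1 :=
    Set.ncard_insert_of_notMem (by simp) (Set.toFinite _)
  unfold deg
  rw [hset, Set.ncard_diff_singleton_of_mem hmem, ncard_prod', e1, e2]
  have : ((G.neighborSet u).ncard + 1) * ((H.neighborSet w).ncard + 1) =
      (G.neighborSet u).ncard * (H.neighborSet w).ncard + (G.neighborSet u).ncard +
      (H.neighborSet w).ncard + 1 := by ring
  rw [this]
  omega

lemma one_le_deg_of_adj {α : Type*} [Fintype α] {G : SimpleGraph α} {u v : α}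
    (h : G.Adj u v) : 1 ≤ deg G u :=
  (Set.ncard_pos (Set.toFinite _)).mpr ⟨v, h⟩

lemma minDeg_le_deg {α : Type*} (G : SimpleGraph α) (v : α) : minDeg G ≤ deg G v :=
  Nat.sInf_le ⟨v, rfl⟩

lemma minEdgeDeg_le_of_adj {α : Type*} {G : SimpleGraph α} {u v : α} (h : G.Adj u v) :
    minEdgeDeg G ≤ deg G u + deg G v - 2 :=
  Nat.sInf_le ⟨u, v, h, rfl⟩

lemma exists_adj {α : Type*} {G : SimpleGraph α} (h : G.edgeSet.Nonempty) :
    ∃ a b, G.Adj a b := by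
  obtain ⟨e, he⟩ := h
  induction e using Sym2.ind with
  | _ a b => exact ⟨a, b, he⟩

end Aux

theorem minEdgeDeg_strongProd {V W : Type*} [Fintype V] [Fintype W]
    (G : SimpleGraph V) (H : SimpleGraph W) (hG : G.Connected) (hH : H.Connected)
    (hGe : G.edgeSet.Nonempty) (hHe : H.edgeSet.Nonempty) :
    minEdgeDeg (strongProd G H) =
      min (minEdgeDeg G * minDeg H + 4 * minDeg H + minEdgeDeg G)
        (minDeg G * minEdgeDeg H + 4 * minDeg G + minEdgeDeg H) := by
  classical
  obtain ⟨ga, gb, hgab⟩ := exists_adj hGe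
  obtain ⟨ha, hb, hhab⟩ := exists_adj hHe
  set P := strongProd G H with hP
  -- achievers
  have hξG : minEdgeDeg G ∈ {d | ∃ u v, G.Adj u v ∧ d = deg G u + deg G v - 2} :=
    Nat.sInf_mem ⟨_, ga, gb, hgab, rfl⟩
  have hξH : minEdgeDeg H ∈ {d | ∃ u v, H.Adj u v ∧ d = deg H u + deg H v - 2} :=
    Nat.sInf_mem ⟨_, ha, hb, hhab, rfl⟩
  have hδG : minDeg G ∈ {d | ∃ v, d = deg G v} := Nat.sInf_mem ⟨_, ga, rfl⟩
  have hδH : minDeg H ∈ {d | ∃ v, d = deg H v} := Nat.sInf_mem ⟨_, ha, rfl⟩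
  obtain ⟨u1, u2, hu, hudeg⟩ := hξG
  obtain ⟨w1, w2, hw, hwdeg⟩ := hξH
  obtain ⟨v0, hv0⟩ := hδG
  obtain ⟨z0, hz0⟩ := hδH
  apply le_antisymm
  · -- sInf ≤ both expressions
    apply le_min
    · -- edge ((u1,z0),(u2,z0))
      have hadj : P.Adj (u1, z0) (u2, z0) := Or.inr (Or.inl ⟨rfl, hu⟩)
      have hle := minEdgeDeg_le_of_adj hadj
      rw [deg_strongProd, deg_strongProd] at hle
      have h1 : 1 ≤ deg G u1 := one_le_deg_of_adj hu
      have h2 : 1 ≤ deg G u2 := one_le_deg_of_adj hu.symm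
      have hsum : deg G u1 + deg G u2 = minEdgeDeg G + 2 := by omega
      refine le_trans hle (le_of_eq ?_)
      have hmul : deg G u1 * deg H z0 + deg G u2 * deg H z0 =
          minEdgeDeg G * deg H z0 + 2 * deg H z0 := by
        rw [← add_mul, hsum]; ring
      rw [← hz0] at *
      omega
    · -- edge ((v0,w1),(v0,w2))
      have hadj : P.Adj (v0, w1) (v0, w2) := Or.inl ⟨rfl, hw⟩
      have hle := minEdgeDeg_le_of_adj hadj
      rw [deg_strongProd, deg_strongProd] at hle
      have h1 : 1 ≤ deg H w1 := one_le_deg_of_adj hw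
      have h2 : 1 ≤ deg H w2 := one_le_deg_of_adj hw.symm
      have hsum : deg H w1 + deg H w2 = minEdgeDeg H + 2 := by omega
      refine le_trans hle (le_of_eq ?_)
      have hmul : deg G v0 * deg H w1 + deg G v0 * deg H w2 =
          deg G v0 * minEdgeDeg H + deg G v0 * 2 := by
        rw [← mul_add, hsum]; ring
      rw [← hv0] at *
      omega
  · -- min ≤ every element
    have hSne : {d | ∃ x y, P.Adj x y ∧ d = deg P x + deg P y - 2}.Nonempty :=
      ⟨_, (u1, z0), (u2, z0), Or.inr (Or.inl ⟨rfl, hu⟩), rfl⟩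
    refine le_csInf hSne ?_
    rintro d ⟨⟨x1, x2⟩, ⟨y1, y2⟩, hadj, rfl⟩
    rw [deg_strongProd, deg_strongProd]
    have key : min (minEdgeDeg G * minDeg H + 4 * minDeg H + minEdgeDeg G)
        (minDeg G * minEdgeDeg H + 4 * minDeg G + minEdgeDeg H) + 2 ≤
        (deg G x1 * deg H x2 + deg G x1 + deg H x2) +
        (deg G y1 * deg H y2 + deg G y1 + deg H y2) := by
      rcases hadj with ⟨h1, h2⟩ | ⟨h1, h2⟩ | ⟨h1, h2⟩
      · -- x1 = y1, H.Adj x2 y2 : use second expression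
        simp only at h1 h2
        subst h1
        refine le_trans (Nat.add_le_add_right (min_le_right _ _) 2) ?_
        have hδ : minDeg G ≤ deg G x1 := minDeg_le_deg G x1
        have hξ : minEdgeDeg H ≤ deg H x2 + deg H y2 - 2 := minEdgeDeg_le_of_adj h2
        have hb1 : 1 ≤ deg H x2 := one_le_deg_of_adj h2
        have hb2 : 1 ≤ deg H y2 := one_le_deg_of_adj h2.symm
        have hξ2 : minEdgeDeg H + 2 ≤ deg H x2 + deg H y2 := by omega
        nlinarith [Nat.mul_le_mul hδ hξ2]
      · -- x2 = y2, G.Adj x1 y1 : use first expression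
        simp only at h1 h2
        subst h1
        refine le_trans (Nat.add_le_add_right (min_le_left _ _) 2) ?_
        have hδ : minDeg H ≤ deg H x2 := minDeg_le_deg H x2
        have hξ : minEdgeDeg G ≤ deg G x1 + deg G y1 - 2 := minEdgeDeg_le_of_adj h2
        have ha1 : 1 ≤ deg G x1 := one_le_deg_of_adj h2
        have ha2 : 1 ≤ deg G y1 := one_le_deg_of_adj h2.symm
        have hξ2 : minEdgeDeg G + 2 ≤ deg G x1 + deg G y1 := by omega
        nlinarith [Nat.mul_le_mul hξ2 hδ]
      · -- diagonal: use first expression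
        simp only at h1 h2
        refine le_trans (Nat.add_le_add_right (min_le_left _ _) 2) ?_
        have hδ1 : minDeg H ≤ deg H x2 := minDeg_le_deg H x2
        have hδ2 : minDeg H ≤ deg H y2 := minDeg_le_deg H y2
        have hξ : minEdgeDeg G ≤ deg G x1 + deg G y1 - 2 := minEdgeDeg_le_of_adj h1
        have ha1 : 1 ≤ deg G x1 := one_le_deg_of_adj h1
        have ha2 : 1 ≤ deg G y1 := one_le_deg_of_adj h1.symm
        have hξ2 : minEdgeDeg G + 2 ≤ deg G x1 + deg G y1 := by omega
        nlinarith [Nat.mul_le_mul hξ2 (le_refl (minDeg H)),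
          Nat.mul_le_mul (le_refl (deg G x1)) hδ1,
          Nat.mul_le_mul (le_refl (deg G y1)) hδ2]
    exact Nat.le_sub_of_add_le key
end

section
/- Let H be a connected simple graph and let K₂ ⊙ H be the graph with vertex set {a,b} × V(H) in which (a, y₁) is adjacent to (b, y₂) whenever y₁ = y₂ or y₁y₂ ∈ E(H), and there are no other edges. Let S be an edge-cut of K₂ ⊙ H such that the vertices of {a} × V(H) do not all lie in one component of (K₂ ⊙ H) − S, and likewise the vertices of {b} × V(H) do not all lie in one component. Then |S| ≥ 2·λ(H). -/
/-- The graph `K₂ ⊙ H`: vertex set `{a,b} × V(H)` (here `Bool × V(H)`), with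
`(a, y₁)` adjacent to `(b, y₂)` iff `a ≠ b` and (`y₁ = y₂` or `y₁y₂ ∈ E(H)`). -/
def K2odot {α : Type*} (H : SimpleGraph α) : SimpleGraph (Bool × α) where
  Adj x y := x.1 ≠ y.1 ∧ (x.2 = y.2 ∨ H.Adj x.2 y.2)
  symm := by
    constructor
    rintro ⟨a, x⟩ ⟨b, y⟩ ⟨h1, h2⟩
    exact ⟨h1.symm, h2.elim (fun h => Or.inl h.symm) (fun h => Or.inr h.symm)⟩
  loopless := by
    constructor
    rintro ⟨a, x⟩ ⟨h1, _⟩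
    exact h1 rfl



/-- ordered cross pairs -/
def OPairs {α : Type*} (H : SimpleGraph α) (X Y : Set α) : Set (α × α) :=
  {p | H.Adj p.1 p.2 ∧ p.1 ∈ X ∧ p.2 ∈ Y}

/-- the pattern set -/
def DMset {α : Type*} (H : SimpleGraph α) (A B : Set α) : Set (α × α) :=
  {p | (p.1 = p.2 ∨ H.Adj p.1 p.2) ∧ ((p.1 ∈ A ∧ p.2 ∉ B) ∨ (p.1 ∉ A ∧ p.2 ∈ B))}

lemma reach_iff {β : Type*} (G : SimpleGraph β) (X : Set β)
    (h : ∀ u v, G.Adj u v → (u ∈ X ↔ v ∈ X)) {x y : β} (hr : G.Reachable x y) :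
    x ∈ X ↔ y ∈ X := by
  obtain ⟨w⟩ := hr
  induction w with
  | nil => exact Iff.rfl
  | cons h' _ ih => exact (h _ _ h').trans ih

lemma edgeConn_le_OPairs {α : Type*} [Fintype α] (H : SimpleGraph α) (X : Set α)
    (hX : X.Nonempty) (hX' : Xᶜ.Nonempty) :
    edgeConn H ≤ (OPairs H X Xᶜ).ncard := by
  classical
  set C : Set (Sym2 α) := (fun p : α × α => s(p.1, p.2)) '' OPairs H X Xᶜ with hC
  have hCsub : C ⊆ H.edgeSet := by
    rintro e ⟨⟨u, v⟩, ⟨hadj, _, _⟩, rfl⟩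
    exact hadj
  have hdisc : ¬ (H.deleteEdges C).Connected := by
    intro hconn
    obtain ⟨x, hx⟩ := hX
    obtain ⟨y, hy⟩ := hX'
    have key : ∀ u v, (H.deleteEdges C).Adj u v → (u ∈ X ↔ v ∈ X) := by
      intro u v huv
      rw [SimpleGraph.deleteEdges_adj] at huv
      constructor
      · intro hu
        by_contra hv
        exact huv.2 ⟨(u, v), ⟨huv.1, hu, hv⟩, rfl⟩
      · intro hv
        by_contra hu
        refine huv.2 ?_
        rw [Sym2.eq_swap]
        exact ⟨(v, u), ⟨huv.1.symm, hv, hu⟩, rfl⟩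
    exact hy ((reach_iff _ X key (hconn.preconnected x y)).mp hx)
  have hmem : C.ncard ∈ {k | ∃ S : Set (Sym2 α), S ⊆ H.edgeSet ∧ S.ncard = k ∧
      ¬ (H.deleteEdges S).Connected} := ⟨C, hCsub, rfl, hdisc⟩
  have h1 : edgeConn H ≤ C.ncard := Nat.sInf_le hmem
  have h2 : C.ncard = (OPairs H X Xᶜ).ncard := by
    rw [hC]
    refine Set.ncard_image_of_injOn ?_
    rintro ⟨u, v⟩ ⟨_, hu, hv⟩ ⟨u', v'⟩ ⟨_, hu', hv'⟩ heq
    rcases Sym2.eq_iff.mp heq with ⟨h1, h2⟩ | ⟨h1, h2⟩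
    · exact Prod.ext h1 h2
    · exact absurd h1 (by rintro rfl; exact hv' hu)
  omega

lemma swap_OPairs {α : Type*} (H : SimpleGraph α) (X Y : Set α) :
    (OPairs H X Y).ncard = (OPairs H Y X).ncard := by
  have himg : Prod.swap '' OPairs H X Y = OPairs H Y X := by
    ext ⟨u, v⟩
    constructor
    · rintro ⟨⟨a, b⟩, ⟨hadj, ha, hb⟩, heq⟩
      obtain ⟨rfl, rfl⟩ : b = u ∧ a = v := by
        simpa [Prod.ext_iff] using heq
      exact ⟨hadj.symm, hb, ha⟩
    · rintro ⟨hadj, hu, hv⟩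
      exact ⟨(v, u), ⟨hadj.symm, hv, hu⟩, rfl⟩
  rw [← himg, Set.ncard_image_of_injective _ Prod.swap_injective]

lemma caseI {α : Type*} [Fintype α] (H : SimpleGraph α) (A B : Set α)
    (h1 : (A ∩ B).Nonempty) (h2 : ((A ∪ B)ᶜ).Nonempty) :
    2 * edgeConn H ≤ (DMset H A B).ncard := by
  classical
  set O₁ := OPairs H (A ∩ B) Bᶜ with hO₁
  set O₂ := OPairs H (B \ A) (A ∩ B) with hO₂
  set O₃ := OPairs H (A \ B) (A ∪ B)ᶜ with hO₃
  set O₄ := OPairs H (A ∪ B)ᶜ B with hO₄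
  -- first cut
  have hc1 : ((A ∩ B)ᶜ).Nonempty := h2.mono (by intro x hx; simp at hx ⊢; tauto)
  have e1 : edgeConn H ≤ (OPairs H (A ∩ B) (A ∩ B)ᶜ).ncard :=
    edgeConn_le_OPairs H _ h1 hc1
  have split1 : OPairs H (A ∩ B) (A ∩ B)ᶜ = O₁ ∪ OPairs H (A ∩ B) (B \ A) := by
    ext ⟨u, v⟩
    simp only [OPairs, hO₁, Set.mem_setOf_eq, Set.mem_union, Set.mem_compl_iff,
      Set.mem_inter_iff, Set.mem_diff]
    tauto
  have d1 : Disjoint O₁ (OPairs H (A ∩ B) (B \ A)) := by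
    rw [Set.disjoint_left]
    rintro p ⟨_, _, hp⟩ ⟨_, _, hq⟩
    exact hp hq.1
  have e1' : edgeConn H ≤ O₁.ncard + O₂.ncard := by
    rw [split1, Set.ncard_union_eq d1 (Set.toFinite _) (Set.toFinite _)] at e1
    rwa [swap_OPairs H (A ∩ B) (B \ A)] at e1
  -- second cut
  have hc2 : (A ∪ B).Nonempty := h1.mono (fun x hx => Or.inl hx.1)
  have e2 : edgeConn H ≤ (OPairs H (A ∪ B) (A ∪ B)ᶜ).ncard :=
    edgeConn_le_OPairs H _ hc2 h2
  have split2 : OPairs H (A ∪ B) (A ∪ B)ᶜ = O₃ ∪ OPairs H B (A ∪ B)ᶜ := by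
    ext ⟨u, v⟩
    simp only [OPairs, hO₃, Set.mem_setOf_eq, Set.mem_union, Set.mem_compl_iff,
      Set.mem_diff]
    tauto
  have d2 : Disjoint O₃ (OPairs H B (A ∪ B)ᶜ) := by
    rw [Set.disjoint_left]
    rintro p ⟨_, hp, _⟩ ⟨_, hq, _⟩
    exact hp.2 hq
  have e2' : edgeConn H ≤ O₃.ncard + O₄.ncard := by
    rw [split2, Set.ncard_union_eq d2 (Set.toFinite _) (Set.toFinite _)] at e2
    rwa [swap_OPairs H B (A ∪ B)ᶜ] at e2
  -- all four inside DMset, pairwise disjoint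
  have hsub : (O₁ ∪ O₂) ∪ (O₃ ∪ O₄) ⊆ DMset H A B := by
    rintro p (( ⟨hadj, hp1, hp2⟩ | ⟨hadj, hp1, hp2⟩) | (⟨hadj, hp1, hp2⟩ | ⟨hadj, hp1, hp2⟩))
    · exact ⟨Or.inr hadj, Or.inl ⟨hp1.1, hp2⟩⟩
    · exact ⟨Or.inr hadj, Or.inr ⟨hp1.2, hp2.2⟩⟩
    · exact ⟨Or.inr hadj, Or.inl ⟨hp1.1, fun hv => hp2 (Or.inr hv)⟩⟩
    · exact ⟨Or.inr hadj, Or.inr ⟨fun hv => hp1 (Or.inl hv), hp2⟩⟩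
  have d12 : Disjoint O₁ O₂ := by
    rw [Set.disjoint_left]; rintro p ⟨_, hp, _⟩ ⟨_, hq, _⟩; exact hq.2 hp.1
  have d34 : Disjoint O₃ O₄ := by
    rw [Set.disjoint_left]; rintro p ⟨_, hp, _⟩ ⟨_, hq, _⟩; exact hq (Or.inl hp.1)
  have dX : Disjoint (O₁ ∪ O₂) (O₃ ∪ O₄) := by
    rw [Set.disjoint_left]
    rintro p (⟨_, hp, _⟩ | ⟨_, hp, _⟩) (⟨_, hq, _⟩ | ⟨_, hq, _⟩)
    · exact hq.2 hp.2
    · exact hq (Or.inl hp.1)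
    · exact hq.2 hp.1
    · exact hq (Or.inr hp.1)
  have hcard : O₁.ncard + O₂.ncard + (O₃.ncard + O₄.ncard) ≤ (DMset H A B).ncard := by
    rw [← Set.ncard_union_eq d12 (Set.toFinite _) (Set.toFinite _),
      ← Set.ncard_union_eq d34 (Set.toFinite _) (Set.toFinite _),
      ← Set.ncard_union_eq dX (Set.toFinite _) (Set.toFinite _)]
    exact Set.ncard_le_ncard hsub (Set.toFinite _)
  omega

lemma caseII {α : Type*} [Fintype α] (H : SimpleGraph α) (A B : Set α)
    (hAB : ∀ x, x ∈ A → x ∈ B → False)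
    (u₀ : α) (hu₀ : u₀ ∈ A) (v₀ : α) (hv₀ : v₀ ∈ B) :
    2 * edgeConn H ≤ (DMset H A B).ncard := by
  classical
  have hne : u₀ ≠ v₀ := fun h => hAB u₀ hu₀ (h ▸ hv₀)
  set ψ₁ : α × α → α × α := fun p => if p.2 ∈ B then (p.2, p.2) else p with hψ₁
  set ψ₂ : α × α → α × α := fun p => if p.2 ∈ A then (p.2, p.2) else (p.2, p.1) with hψ₂
  set Src₁ := OPairs H {u₀} ({u₀}ᶜ) with hSrc₁
  set Src₂ := OPairs H {v₀} ({v₀}ᶜ) with hSrc₂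
  have e1 : edgeConn H ≤ Src₁.ncard :=
    edgeConn_le_OPairs H _ ⟨u₀, rfl⟩ ⟨v₀, fun h => hne (by simpa using h.symm)⟩
  have e2 : edgeConn H ≤ Src₂.ncard :=
    edgeConn_le_OPairs H _ ⟨v₀, rfl⟩ ⟨u₀, fun h => hne (by simpa using h)⟩
  -- facts about sources
  have hsrc1 : ∀ p ∈ Src₁, p.1 = u₀ ∧ H.Adj u₀ p.2 ∧ p.2 ≠ u₀ := by
    rintro ⟨x, w⟩ ⟨hadj, hx, hw⟩
    have hx' : x = u₀ := hx
    subst hx'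
    exact ⟨rfl, hadj, fun h => hw (by simpa using h)⟩
  have hsrc2 : ∀ p ∈ Src₂, p.1 = v₀ ∧ H.Adj v₀ p.2 ∧ p.2 ≠ v₀ := by
    rintro ⟨x, w⟩ ⟨hadj, hx, hw⟩
    have hx' : x = v₀ := hx
    subst hx'
    exact ⟨rfl, hadj, fun h => hw (by simpa using h)⟩
  -- injectivity
  have inj1 : Set.InjOn ψ₁ Src₁ := by
    rintro p hp q hq heq
    obtain ⟨hp1, hpa, hp2⟩ := hsrc1 p hp
    obtain ⟨hq1, hqa, hq2⟩ := hsrc1 q hq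
    by_cases hw : p.2 ∈ B <;> by_cases hw' : q.2 ∈ B <;>
      simp only [hψ₁, hw, hw', if_pos, if_neg, not_false_iff] at heq
    · have : p.2 = q.2 := (Prod.ext_iff.mp heq).1
      exact Prod.ext (hp1.trans hq1.symm) this
    · exact absurd ((Prod.ext_iff.mp heq).1.trans hq1) hp2
    · exact absurd (hp1.symm.trans (Prod.ext_iff.mp heq).1).symm hq2
    · exact heq
  have inj2 : Set.InjOn ψ₂ Src₂ := by
    rintro p hp q hq heq
    obtain ⟨hp1, hpa, hp2⟩ := hsrc2 p hp
    obtain ⟨hq1, hqa, hq2⟩ := hsrc2 q hq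
    by_cases hw : p.2 ∈ A <;> by_cases hw' : q.2 ∈ A <;>
      simp only [hψ₂, hw, hw', if_pos, if_neg, not_false_iff] at heq
    · rw [Prod.ext_iff] at heq
      obtain ⟨e1, -⟩ := heq
      dsimp at e1
      exact Prod.ext (hp1.trans hq1.symm) e1
    · rw [Prod.ext_iff] at heq
      obtain ⟨e1, e2⟩ := heq
      dsimp at e1 e2
      exact absurd (e1.symm.trans (e2.trans hq1)) hq2
    · rw [Prod.ext_iff] at heq
      obtain ⟨e1, e2⟩ := heq
      dsimp at e1 e2
      exact absurd (e1.trans (e2.symm.trans hp1)) hp2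
    · rw [Prod.ext_iff] at heq
      obtain ⟨e1, e2⟩ := heq
      dsimp at e1 e2
      exact Prod.ext e2 e1
  -- images inside DMset
  have img1 : ψ₁ '' Src₁ ⊆ DMset H A B := by
    rintro q ⟨p, hp, rfl⟩
    obtain ⟨hp1, hpa, hp2⟩ := hsrc1 p hp
    by_cases hw : p.2 ∈ B <;> simp only [hψ₁, hw, if_pos, if_neg, not_false_iff]
    · exact ⟨Or.inl rfl, Or.inr ⟨fun h => hAB _ h hw, hw⟩⟩
    · exact ⟨Or.inr (hp1 ▸ hpa : H.Adj p.1 p.2), Or.inl ⟨hp1 ▸ hu₀, hw⟩⟩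
  have img2 : ψ₂ '' Src₂ ⊆ DMset H A B := by
    rintro q ⟨p, hp, rfl⟩
    obtain ⟨hp1, hpa, hp2⟩ := hsrc2 p hp
    by_cases hw : p.2 ∈ A <;> simp only [hψ₂, hw, if_pos, if_neg, not_false_iff]
    · exact ⟨Or.inl rfl, Or.inl ⟨hw, fun h => hAB _ hw h⟩⟩
    · exact ⟨Or.inr (hp1 ▸ hpa.symm : H.Adj p.2 p.1), Or.inr ⟨hw, hp1 ▸ hv₀⟩⟩
  -- disjointness of the two images
  have dimg : Disjoint (ψ₁ '' Src₁) (ψ₂ '' Src₂) := by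
    rw [Set.disjoint_left]
    rintro q ⟨p, hp, rfl⟩ ⟨r, hr, heq⟩
    obtain ⟨hp1, hpa, hp2⟩ := hsrc1 p hp
    obtain ⟨hr1, hra, hr2⟩ := hsrc2 r hr
    by_cases hw : p.2 ∈ B <;> by_cases hw' : r.2 ∈ A <;>
      simp only [hψ₁, hψ₂, hw, hw', if_pos, if_neg, not_false_iff] at heq
    · rw [Prod.ext_iff] at heq
      obtain ⟨e1, -⟩ := heq
      dsimp at e1
      exact hAB p.2 (e1 ▸ hw') hw
    · rw [Prod.ext_iff] at heq
      obtain ⟨e1, e2⟩ := heq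
      dsimp at e1 e2
      exact hr2 (e1.trans (e2.symm.trans hr1))
    · rw [Prod.ext_iff] at heq
      obtain ⟨e1, e2⟩ := heq
      dsimp at e1 e2
      exact hp2 (e2.symm.trans (e1.trans hp1))
    · rw [Prod.ext_iff] at heq
      obtain ⟨e1, -⟩ := heq
      dsimp at e1
      exact hw' ((e1.trans hp1).symm ▸ hu₀)
  have hcard : Src₁.ncard + Src₂.ncard ≤ (DMset H A B).ncard := by
    rw [← Set.ncard_image_of_injOn inj1, ← Set.ncard_image_of_injOn inj2,
      ← Set.ncard_union_eq dimg (Set.toFinite _) (Set.toFinite _)]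
    exact Set.ncard_le_ncard (Set.union_subset img1 img2) (Set.toFinite _)
  omega

lemma binaryMain {α : Type*} [Fintype α] (H : SimpleGraph α) (A B : Set α)
    (hA : A.Nonempty) (hA' : Aᶜ.Nonempty) (hB : B.Nonempty) (hB' : Bᶜ.Nonempty) :
    2 * edgeConn H ≤ (DMset H A B).ncard := by
  by_cases h1 : (A ∩ B).Nonempty
  · by_cases h2 : ((A ∪ B)ᶜ).Nonempty
    · exact caseI H A B h1 h2
    · have hDM : DMset H Aᶜ Bᶜ = DMset H A B := by
        ext p
        simp only [DMset, Set.mem_setOf_eq, Set.mem_compl_iff, not_not]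
        tauto
      have hdisj : ∀ x, x ∈ Aᶜ → x ∈ Bᶜ → False := by
        intro x hx hy
        exact h2 ⟨x, fun h => ((Set.mem_union x A B).mp h).elim hx hy⟩
      obtain ⟨ua, hua⟩ := hA'
      obtain ⟨ub, hub⟩ := hB'
      have := caseII H Aᶜ Bᶜ hdisj ua hua ub hub
      rwa [hDM] at this
  · have h0 : ∀ x, x ∈ A → x ∈ B → False := fun x hx hy => h1 ⟨x, hx, hy⟩
    obtain ⟨ua, hua⟩ := hA
    obtain ⟨ub, hub⟩ := hB
    exact caseII H A B h0 ua hua ub hub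

lemma mainCount {α : Type*} [Fintype α] (H : SimpleGraph α) {κ : Type*} (a b : α → κ)
    (ha : ∃ y₁ y₂, a y₁ ≠ a y₂) (hb : ∃ z₁ z₂, b z₁ ≠ b z₂) :
    2 * edgeConn H ≤ {p : α × α | (p.1 = p.2 ∨ H.Adj p.1 p.2) ∧ a p.1 ≠ b p.2}.ncard := by
  classical
  obtain ⟨y₁, y₂, hay⟩ := ha
  obtain ⟨z₁, z₂, hbz⟩ := hb
  by_cases hc : ∃ u v : α, a u = b v
  · obtain ⟨u₀, v₀, huv⟩ := hc
    set A : Set α := {u | a u = a u₀} with hA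
    set B : Set α := {v | b v = a u₀} with hB
    have hDM : DMset H A B ⊆ {p : α × α | (p.1 = p.2 ∨ H.Adj p.1 p.2) ∧ a p.1 ≠ b p.2} := by
      rintro p ⟨h1, h2⟩
      refine ⟨h1, ?_⟩
      rcases h2 with ⟨hpa, hpb⟩ | ⟨hpa, hpb⟩
      · intro h
        exact hpb (h.symm.trans (hpa : a p.1 = a u₀))
      · intro h
        exact hpa (h.trans (hpb : b p.2 = a u₀))
    have hAne : A.Nonempty := ⟨u₀, rfl⟩
    have hBne : B.Nonempty := ⟨v₀, huv.symm⟩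
    have hAc : Aᶜ.Nonempty := by
      by_contra hn
      rw [Set.not_nonempty_iff_eq_empty, Set.compl_empty_iff] at hn
      have h1 : y₁ ∈ A := hn.symm ▸ Set.mem_univ y₁
      have h2 : y₂ ∈ A := hn.symm ▸ Set.mem_univ y₂
      exact hay ((h1 : a y₁ = a u₀).trans (h2 : a y₂ = a u₀).symm)
    have hBc : Bᶜ.Nonempty := by
      by_contra hn
      rw [Set.not_nonempty_iff_eq_empty, Set.compl_empty_iff] at hn
      have h1 : z₁ ∈ B := hn.symm ▸ Set.mem_univ z₁
      have h2 : z₂ ∈ B := hn.symm ▸ Set.mem_univ z₂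
      exact hbz ((h1 : b z₁ = a u₀).trans (h2 : b z₂ = a u₀).symm)
    calc 2 * edgeConn H ≤ (DMset H A B).ncard := binaryMain H A B hAne hAc hBne hBc
      _ ≤ _ := Set.ncard_le_ncard hDM (Set.toFinite _)
  · push_neg at hc
    have hne : y₁ ≠ y₂ := fun h => hay (h ▸ rfl)
    have hDM : DMset H {y₁} {y₂} ⊆
        {p : α × α | (p.1 = p.2 ∨ H.Adj p.1 p.2) ∧ a p.1 ≠ b p.2} :=
      fun p hp => ⟨hp.1, hc p.1 p.2⟩
    have hd : ∀ x, x ∈ ({y₁} : Set α) → x ∈ ({y₂} : Set α) → False := by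
      intro x hx hy
      exact hne ((Set.eq_of_mem_singleton hx).symm.trans (Set.eq_of_mem_singleton hy))
    calc 2 * edgeConn H ≤ (DMset H {y₁} {y₂}).ncard := caseII H {y₁} {y₂} hd y₁ rfl y₂ rfl
      _ ≤ _ := Set.ncard_le_ncard hDM (Set.toFinite _)


theorem two_mul_edgeConn_le_of_K2odot_cut {α : Type*} [Fintype α]
    (H : SimpleGraph α) (hH : H.Connected) (S : Set (Sym2 (Bool × α)))
    (hsub : S ⊆ (K2odot H).edgeSet)
    (hcut : ¬ ((K2odot H).deleteEdges S).Connected)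
    (ha : ∃ y₁ y₂ : α, ((K2odot H).deleteEdges S).connectedComponentMk (true, y₁) ≠
      ((K2odot H).deleteEdges S).connectedComponentMk (true, y₂))
    (hb : ∃ y₁ y₂ : α, ((K2odot H).deleteEdges S).connectedComponentMk (false, y₁) ≠
      ((K2odot H).deleteEdges S).connectedComponentMk (false, y₂)) :
    2 * edgeConn H ≤ S.ncard := by
  classical
  have hmain := mainCount H
    (fun y => ((K2odot H).deleteEdges S).connectedComponentMk (true, y))
    (fun y => ((K2odot H).deleteEdges S).connectedComponentMk (false, y)) ha hb
  set D : Set (α × α) := {p : α × α | (p.1 = p.2 ∨ H.Adj p.1 p.2) ∧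
    ((K2odot H).deleteEdges S).connectedComponentMk (true, p.1) ≠
    ((K2odot H).deleteEdges S).connectedComponentMk (false, p.2)} with hD
  have hmain' : 2 * edgeConn H ≤ D.ncard := hmain
  set φ : α × α → Sym2 (Bool × α) :=
    fun p => s(((true : Bool), p.1), ((false : Bool), p.2)) with hφ
  have hφinj : Function.Injective φ := by
    intro p q h
    rcases Sym2.eq_iff.mp h with ⟨h1, h2⟩ | ⟨h1, h2⟩
    · have e1 : p.1 = q.1 := congrArg (Prod.snd : Bool × α → α) h1
      have e2 : p.2 = q.2 := congrArg (Prod.snd : Bool × α → α) h2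
      exact Prod.ext e1 e2
    · have e1 : (true : Bool) = false := congrArg (Prod.fst : Bool × α → Bool) h1
      exact absurd e1 (by simp)
  have himg : φ '' D ⊆ S := by
    rintro e ⟨p, hp, rfl⟩
    by_contra hS
    apply hp.2
    have hadj : ((K2odot H).deleteEdges S).Adj (true, p.1) (false, p.2) := by
      rw [SimpleGraph.deleteEdges_adj]
      exact ⟨⟨by simp, hp.1⟩, hS⟩
    exact SimpleGraph.ConnectedComponent.sound hadj.reachable
  have hcard : D.ncard ≤ S.ncard := by
    rw [← Set.ncard_image_of_injOn hφinj.injOn]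
    exact Set.ncard_le_ncard himg (Set.toFinite _)
  omega
end
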